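/- arXiv:1403.4586 — 6 statements merged into one kernel-verified Lean document; each statement's English description precedes it below -/
import Mathlib

section
/- Let G be a profinite group and let ρ: G → U_4(F_p) be a continuous surjective group homomorphism. Let χ_1 = ρ_{12}, χ_2 = ρ_{23}, χ_3 = ρ_{34} be the compositions of ρ with the coordinate projections at positions (1,2), (2,3), (3,4), which are group homomorphisms G → F_p. Then χ_1, χ_2, χ_3 are F_p-linearly independent elements of H^1(G, F_p), and the cup products χ_1 ∪ χ_2 and χ_2 ∪ χ_3 both vanish in H^2(G, F_p). -/
open Matrix

/-- An upper-triangular unipotent matrix: zero entries below the diagonal and ones on it. -/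
def IsUpperUnitriangular {n : ℕ} {p : ℕ} (M : Matrix (Fin n) (Fin n) (ZMod p)) : Prop :=
  (∀ i j : Fin n, (j : ℕ) < (i : ℕ) → M i j = 0) ∧ ∀ i, M i i = 1

/-- **Remark (Section 4).**  Let `G` be a profinite group and
`ρ : G → U₄(F_p)` a continuous surjective homomorphism (here `U4` is the subgroup of
`GL₄(F_p)` consisting of the upper-triangular unipotent matrices).  Let
`χ₁ = ρ₁₂`, `χ₂ = ρ₂₃`, `χ₃ = ρ₃₄` be the compositions of `ρ` with the coordinate
projections at the positions `(1,2)`, `(2,3)`, `(3,4)`.  Then the `χ`'s are continuous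
group homomorphisms `G → F_p`, i.e. elements of `H¹(G, F_p)`, they are `F_p`-linearly
independent, and the cup products `χ₁ ∪ χ₂` and `χ₂ ∪ χ₃` vanish in `H²(G, F_p)`
(i.e. the 2-cocycles `(g,h) ↦ χᵢ g * χⱼ h` are coboundaries of continuous 1-cochains). -/
theorem surjection_to_U4_gives_lin_indep_chars_with_vanishing_cups
    (p : ℕ) [Fact p.Prime]
    (G : Type*) [Group G] [TopologicalSpace G] [IsTopologicalGroup G]
    [CompactSpace G] [TotallyDisconnectedSpace G] [T2Space G]
    (U4 : Subgroup (Matrix.GeneralLinearGroup (Fin 4) (ZMod p)))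
    (hU4 : ∀ g : Matrix.GeneralLinearGroup (Fin 4) (ZMod p),
      g ∈ U4 ↔ IsUpperUnitriangular (g : Matrix (Fin 4) (Fin 4) (ZMod p)))
    (ρ : G →* U4) (hρcont : Continuous ρ) (hρsurj : Function.Surjective ρ) :
    (∀ i : Fin 3,
      -- each χᵢ is a continuous group homomorphism, i.e. an element of H¹(G, F_p)
      Continuous (fun g : G =>
        ((ρ g : Matrix.GeneralLinearGroup (Fin 4) (ZMod p)) : Matrix (Fin 4) (Fin 4) (ZMod p))
          i.castSucc i.succ) ∧
      (∀ g h : G,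
        ((ρ (g * h) : Matrix.GeneralLinearGroup (Fin 4) (ZMod p)) : Matrix (Fin 4) (Fin 4) (ZMod p))
          i.castSucc i.succ
        = ((ρ g : Matrix.GeneralLinearGroup (Fin 4) (ZMod p)) : Matrix (Fin 4) (Fin 4) (ZMod p))
            i.castSucc i.succ
          + ((ρ h : Matrix.GeneralLinearGroup (Fin 4) (ZMod p)) : Matrix (Fin 4) (Fin 4) (ZMod p))
              i.castSucc i.succ)) ∧
    -- χ₁, χ₂, χ₃ are F_p-linearly independent in H¹(G, F_p)
    (∀ x y z : ZMod p,
      (∀ g : G,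
        x * ((ρ g : Matrix.GeneralLinearGroup (Fin 4) (ZMod p)) : Matrix (Fin 4) (Fin 4) (ZMod p)) 0 1
        + y * ((ρ g : Matrix.GeneralLinearGroup (Fin 4) (ZMod p)) : Matrix (Fin 4) (Fin 4) (ZMod p)) 1 2
        + z * ((ρ g : Matrix.GeneralLinearGroup (Fin 4) (ZMod p)) : Matrix (Fin 4) (Fin 4) (ZMod p)) 2 3
        = 0) → x = 0 ∧ y = 0 ∧ z = 0) ∧
    -- χ₁ ∪ χ₂ = 0 in H²(G, F_p)
    (∃ c : G → ZMod p, Continuous c ∧ ∀ g h : G,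
      ((ρ g : Matrix.GeneralLinearGroup (Fin 4) (ZMod p)) : Matrix (Fin 4) (Fin 4) (ZMod p)) 0 1
        * ((ρ h : Matrix.GeneralLinearGroup (Fin 4) (ZMod p)) : Matrix (Fin 4) (Fin 4) (ZMod p)) 1 2
      = c h - c (g * h) + c g) ∧
    -- χ₂ ∪ χ₃ = 0 in H²(G, F_p)
    (∃ c : G → ZMod p, Continuous c ∧ ∀ g h : G,
      ((ρ g : Matrix.GeneralLinearGroup (Fin 4) (ZMod p)) : Matrix (Fin 4) (Fin 4) (ZMod p)) 1 2
        * ((ρ h : Matrix.GeneralLinearGroup (Fin 4) (ZMod p)) : Matrix (Fin 4) (Fin 4) (ZMod p)) 2 3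
      = c h - c (g * h) + c g) := by
    -- the matrix-valued function
  set F : G → Matrix (Fin 4) (Fin 4) (ZMod p) :=
    fun g => ((ρ g : Matrix.GeneralLinearGroup (Fin 4) (ZMod p)) :
      Matrix (Fin 4) (Fin 4) (ZMod p)) with hF
  have hut : ∀ g : G, IsUpperUnitriangular (F g) := fun g => (hU4 _).mp (ρ g).2
  have h0 : ∀ (g : G) (i j : Fin 4), (j : ℕ) < (i : ℕ) → F g i j = 0 := fun g => (hut g).1
  have h1 : ∀ (g : G) (i : Fin 4), F g i i = 1 := fun g => (hut g).2
  have hmul : ∀ g h : G, F (g * h) = F g * F h := by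
    intro g h
    have : ρ (g * h) = ρ g * ρ h := map_mul ρ g h
    simp only [hF, this, Subgroup.coe_mul, Units.val_mul]
  have hcont : ∀ i j : Fin 4, Continuous fun g : G => F g i j := by
    intro i j
    exact Continuous.comp
      (continuous_of_discreteTopology
        (f := fun u : U4 => ((u : Matrix.GeneralLinearGroup (Fin 4) (ZMod p)) :
          Matrix (Fin 4) (Fin 4) (ZMod p)) i j)) hρcont
  have hgen : ∀ i j : Fin 4, (i : ℕ) < (j : ℕ) →
      ∃ g : G, F g = 1 + Matrix.single i j 1 := by
    intro i j hij
    have hne : j ≠ i := by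
      intro e
      rw [e] at hij
      exact lt_irrefl _ hij
    have hEE : Matrix.single i j (1 : ZMod p) * Matrix.single i j 1 = 0 :=
      Matrix.single_mul_single_of_ne (c := (1 : ZMod p)) i j i hne 1
    have hinv : (1 + Matrix.single i j (1 : ZMod p)) *
        (1 - Matrix.single i j 1) = 1 := by
      rw [add_mul, one_mul, mul_sub, mul_one, hEE, sub_zero]
      abel
    have hinv' : (1 - Matrix.single i j (1 : ZMod p)) *
        (1 + Matrix.single i j 1) = 1 := by
      rw [sub_mul, one_mul, mul_add, mul_one, hEE, add_zero]
      abel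
    set u : Matrix.GeneralLinearGroup (Fin 4) (ZMod p) :=
      Units.mk (1 + Matrix.single i j 1) (1 - Matrix.single i j 1) hinv hinv'
      with hu
    have hmem : u ∈ U4 := by
      rw [hU4]
      constructor
      · intro a b hba
        have hia : ¬(i = a ∧ j = b) := by
          rintro ⟨rfl, rfl⟩
          omega
        have hab : a ≠ b := by
          intro e
          rw [e] at hba
          exact lt_irrefl _ hba
        simp [hu, Matrix.add_apply, Matrix.one_apply, Matrix.single, hia, hab]
      · intro a
        have hia : ¬(i = a ∧ j = a) := by
          rintro ⟨rfl, rfl⟩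
          omega
        simp [hu, Matrix.add_apply, Matrix.one_apply, Matrix.single, hia]
    obtain ⟨g, hg⟩ := hρsurj ⟨u, hmem⟩
    refine ⟨g, ?_⟩
    simp [hF, hg, hu]
  refine ⟨?_, ?_, ?_, ?_⟩
  · -- continuity and additivity of the χ's
    intro i
    refine ⟨hcont _ _, ?_⟩
    intro g h
    fin_cases i
    · show F (g * h) 0 1 = F g 0 1 + F h 0 1
      rw [hmul, Matrix.mul_apply, Fin.sum_univ_four]
      rw [h1 g 0, h1 h 1, h0 h 2 1 (by decide), h0 h 3 1 (by decide)]
      ring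
    · show F (g * h) 1 2 = F g 1 2 + F h 1 2
      rw [hmul, Matrix.mul_apply, Fin.sum_univ_four]
      rw [h1 g 1, h1 h 2, h0 g 1 0 (by decide), h0 h 3 2 (by decide)]
      ring
    · show F (g * h) 2 3 = F g 2 3 + F h 2 3
      rw [hmul, Matrix.mul_apply, Fin.sum_univ_four]
      rw [h1 g 2, h1 h 3, h0 g 2 0 (by decide), h0 g 2 1 (by decide)]
      ring
  · -- linear independence
    intro x y z hxyz
    obtain ⟨g1, hg1⟩ := hgen 0 1 (by decide)
    obtain ⟨g2, hg2⟩ := hgen 1 2 (by decide)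
    obtain ⟨g3, hg3⟩ := hgen 2 3 (by decide)
    have e1 := hxyz g1
    have e2 := hxyz g2
    have e3 := hxyz g3
    rw [show ((ρ g1 : Matrix.GeneralLinearGroup (Fin 4) (ZMod p)) :
      Matrix (Fin 4) (Fin 4) (ZMod p)) = F g1 from rfl] at e1
    rw [show ((ρ g2 : Matrix.GeneralLinearGroup (Fin 4) (ZMod p)) :
      Matrix (Fin 4) (Fin 4) (ZMod p)) = F g2 from rfl] at e2
    rw [show ((ρ g3 : Matrix.GeneralLinearGroup (Fin 4) (ZMod p)) :
      Matrix (Fin 4) (Fin 4) (ZMod p)) = F g3 from rfl] at e3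
    rw [hg1] at e1
    rw [hg2] at e2
    rw [hg3] at e3
    simp [Matrix.add_apply, Matrix.one_apply, Matrix.single,
      Matrix.of_apply] at e1 e2 e3
    exact ⟨e1, e2, e3⟩
  · -- χ₁ ∪ χ₂ = 0
    refine ⟨fun g => -(F g 0 2), (hcont 0 2).neg, ?_⟩
    intro g h
    have key : F (g * h) 0 2 =
        F h 0 2 + F g 0 1 * F h 1 2 + F g 0 2 := by
      rw [hmul, Matrix.mul_apply, Fin.sum_univ_four, h1 g 0, h1 h 2,
        h0 h 3 2 (by decide)]
      ring
    have : F g 0 1 * F h 1 2 = F (g * h) 0 2 - F h 0 2 - F g 0 2 := by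
      rw [key]; ring
    rw [this]; ring
  · -- χ₂ ∪ χ₃ = 0
    refine ⟨fun g => -(F g 1 3), (hcont 1 3).neg, ?_⟩
    intro g h
    have key : F (g * h) 1 3 =
        F h 1 3 + F g 1 2 * F h 2 3 + F g 1 3 := by
      rw [hmul, Matrix.mul_apply, Fin.sum_univ_four, h1 g 1, h1 h 3,
        h0 g 1 0 (by decide)]
      ring
    have : F g 1 2 * F h 2 3 = F (g * h) 1 3 - F h 1 3 - F g 1 3 := by
      rw [key]; ring
    rw [this]; ring
end

section
/- Let G be a profinite group, p a prime, and n ≥ 3 an integer. The following are equivalent: (1) G has the vanishing n-fold Massey product property with respect to F_p, i.e., every defined n-fold Massey product ⟨a_1,…,a_n⟩ of elements a_1,…,a_n ∈ H^1(G, F_p) contains 0; (2) for every continuous homomorphism ρ̄: G → Ū_{n+1}(F_p), the continuous homomorphism (ρ̄_{12}, ρ̄_{23}, …, ρ̄_{n,n+1}): G → F_p^n lifts through the quotient map U_{n+1}(F_p) → F_p^n (sending a matrix to its superdiagonal entries) to a continuous homomorphism ρ: G → U_{n+1}(F_p). -/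
open Matrix

/-- A defining system for the `n`-fold Massey product `⟨a 1, …, a n⟩` in the DGA of
continuous inhomogeneous cochains of a topological group `G` with `F_p`-coefficients:
a family of continuous 1-cochains `f i j` (`1 ≤ i < j ≤ n+1`, `(i,j) ≠ (1,n+1)`) such
that `f i (i+1)` represents `a i` and `∂(f i j) = ∑_{i<l<j} f i l ∪ f l j` for `i+1 < j`,
where `(∂u)(g,h) = u(h) − u(gh) + u(g)` and `(u ∪ v)(g,h) = u(g)·v(h)`. -/
def IsMasseyDefiningSystem (G : Type*) [Group G] [TopologicalSpace G] (p n : ℕ)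
    (a : ℕ → G → ZMod p) (f : ℕ → ℕ → G → ZMod p) : Prop :=
  (∀ i j : ℕ, 1 ≤ i → i < j → j ≤ n + 1 → ¬(i = 1 ∧ j = n + 1) → Continuous (f i j)) ∧
  (∀ i : ℕ, 1 ≤ i → i ≤ n → f i (i + 1) = a i) ∧
  (∀ i j : ℕ, 1 ≤ i → i + 1 < j → j ≤ n + 1 → ¬(i = 1 ∧ j = n + 1) →
    ∀ g h : G, f i j h - f i j (g * h) + f i j g = ∑ l ∈ Finset.Ioo i j, f i l g * f l j h)

/-- The `n`-fold Massey product `⟨a 1, …, a n⟩` is defined, i.e. admits a defining system. -/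
def MasseyProductDefined (G : Type*) [Group G] [TopologicalSpace G] (p n : ℕ)
    (a : ℕ → G → ZMod p) : Prop :=
  ∃ f, IsMasseyDefiningSystem G p n a f

/-- The `n`-fold Massey product `⟨a 1, …, a n⟩` contains `0`: for some defining system the
value 2-cocycle `∑_{k=2}^{n} f 1 k ∪ f k (n+1)` is the coboundary of a continuous
1-cochain. -/
def MasseyProductContainsZero (G : Type*) [Group G] [TopologicalSpace G] (p n : ℕ)
    (a : ℕ → G → ZMod p) : Prop :=
  ∃ f, IsMasseyDefiningSystem G p n a f ∧
    ∃ c : G → ZMod p, Continuous c ∧ ∀ g h : G,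
      (∑ k ∈ Finset.Ioo 1 (n + 1), f 1 k g * f k (n + 1) h) = c h - c (g * h) + c g

/-- `G` has the vanishing `n`-fold Massey product property with respect to `F_p`: every
defined `n`-fold Massey product of elements of `H¹(G, F_p)` contains `0`. -/
def HasVanishingMasseyProduct (G : Type*) [Group G] [TopologicalSpace G]
    (p n : ℕ) : Prop :=
  ∀ a : ℕ → G → ZMod p,
    (∀ i : ℕ, 1 ≤ i → i ≤ n → Continuous (a i) ∧
      ∀ g h : G, a i (g * h) = a i g + a i h) →
    MasseyProductDefined G p n a → MasseyProductContainsZero G p n a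

namespace MasseyAux

variable {p n : ℕ}

instance matDiscrete (p n : ℕ) : DiscreteTopology (Matrix (Fin n) (Fin n) (ZMod p)) :=
  (by exact Pi.discreteTopology : DiscreteTopology (Fin n → Fin n → ZMod p))

instance glDiscrete (p n : ℕ) : DiscreteTopology (Matrix.GeneralLinearGroup (Fin n) (ZMod p)) :=
  Units.instDiscreteTopology

instance subDiscrete (p n : ℕ) (U : Subgroup (Matrix.GeneralLinearGroup (Fin n) (ZMod p))) :
    DiscreteTopology U := by infer_instance

/-- entries of an element of a subgroup of GL. -/
def matU (U : Subgroup (Matrix.GeneralLinearGroup (Fin (n + 1)) (ZMod p))) (u : U) :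
    Matrix (Fin (n + 1)) (Fin (n + 1)) (ZMod p) :=
  ((u : Matrix.GeneralLinearGroup (Fin (n + 1)) (ZMod p)) :
    Matrix (Fin (n + 1)) (Fin (n + 1)) (ZMod p))

lemma matU_mul (U : Subgroup (Matrix.GeneralLinearGroup (Fin (n + 1)) (ZMod p))) (u v : U) :
    matU U (u * v) = matU U u * matU U v := rfl

lemma matU_injective (U : Subgroup (Matrix.GeneralLinearGroup (Fin (n + 1)) (ZMod p))) :
    Function.Injective (matU U) := fun _ _ h => Subtype.ext (Units.ext h)

lemma matU_uni {U : Subgroup (Matrix.GeneralLinearGroup (Fin (n + 1)) (ZMod p))}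
    (hU : ∀ g : Matrix.GeneralLinearGroup (Fin (n + 1)) (ZMod p),
      g ∈ U ↔ IsUpperUnitriangular (g : Matrix (Fin (n + 1)) (Fin (n + 1)) (ZMod p)))
    (u : U) : IsUpperUnitriangular (matU U u) := (hU _).mp u.2

lemma uni_mul {M N : Matrix (Fin (n + 1)) (Fin (n + 1)) (ZMod p)}
    (hM : IsUpperUnitriangular M) (hN : IsUpperUnitriangular N) :
    IsUpperUnitriangular (M * N) := by
  constructor
  · intro I J hJI
    rw [Matrix.mul_apply]
    apply Finset.sum_eq_zero
    intro l _
    rcases lt_or_ge (l : ℕ) (I : ℕ) with hl | hl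
    · rw [hM.1 I l hl, zero_mul]
    · rw [hN.1 l J (by omega), mul_zero]
  · intro I
    rw [Matrix.mul_apply, Finset.sum_eq_single I]
    · rw [hM.2, hN.2, one_mul]
    · intro l _ hne
      have hne' : (l : ℕ) ≠ (I : ℕ) := fun hh => hne (Fin.ext hh)
      rcases lt_or_ge (l : ℕ) (I : ℕ) with hl | hl
      · rw [hM.1 I l hl, zero_mul]
      · rw [hN.1 l I (by omega), mul_zero]
    · intro h; exact absurd (Finset.mem_univ I) h

lemma uni_mul_apply {M N : Matrix (Fin (n + 1)) (Fin (n + 1)) (ZMod p)}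
    (hM : IsUpperUnitriangular M) (hN : IsUpperUnitriangular N)
    {I J : Fin (n + 1)} (h : I < J) :
    (M * N) I J = M I J + N I J + ∑ l ∈ Finset.Ioo I J, M I l * N l J := by
  have hzero : ∀ l ∈ Finset.univ, l ∉ Finset.Icc I J → M I l * N l J = 0 := by
    intro l _ hl
    rw [Finset.mem_Icc, not_and_or] at hl
    rcases hl with hl | hl
    · rw [hM.1 I l (by rw [not_le] at hl; exact hl), zero_mul]
    · rw [hN.1 l J (by rw [not_le] at hl; exact hl), mul_zero]
  rw [Matrix.mul_apply, ← Finset.sum_subset (Finset.subset_univ (Finset.Icc I J)) hzero,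
    ← Finset.Ioc_insert_left h.le, Finset.sum_insert Finset.left_notMem_Ioc,
    ← Finset.Ioo_insert_right h, Finset.sum_insert Finset.right_notMem_Ioo,
    hM.2, hN.2, one_mul, mul_one]
  ring

lemma uni_isUnit {M : Matrix (Fin (n + 1)) (Fin (n + 1)) (ZMod p)}
    (hM : IsUpperUnitriangular M) : IsUnit M := by
  rw [Matrix.isUnit_iff_isUnit_det]
  have hbt : M.BlockTriangular id := by
    intro i j hji
    exact hM.1 i j hji
  rw [Matrix.det_of_upperTriangular hbt]
  simp [hM.2]

/-- Build an element of `U` from an upper unitriangular matrix. -/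
noncomputable def mkU (U : Subgroup (Matrix.GeneralLinearGroup (Fin (n + 1)) (ZMod p)))
    (hU : ∀ g : Matrix.GeneralLinearGroup (Fin (n + 1)) (ZMod p),
      g ∈ U ↔ IsUpperUnitriangular (g : Matrix (Fin (n + 1)) (Fin (n + 1)) (ZMod p)))
    (M : Matrix (Fin (n + 1)) (Fin (n + 1)) (ZMod p)) (hM : IsUpperUnitriangular M) : U :=
  ⟨(uni_isUnit hM).unit, (hU _).mpr (by simpa [IsUnit.unit_spec] using hM)⟩

lemma matU_mkU (U : Subgroup (Matrix.GeneralLinearGroup (Fin (n + 1)) (ZMod p)))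
    (hU : ∀ g : Matrix.GeneralLinearGroup (Fin (n + 1)) (ZMod p),
      g ∈ U ↔ IsUpperUnitriangular (g : Matrix (Fin (n + 1)) (Fin (n + 1)) (ZMod p)))
    (M : Matrix (Fin (n + 1)) (Fin (n + 1)) (ZMod p)) (hM : IsUpperUnitriangular M) :
    matU U (mkU U hU M hM) = M := (uni_isUnit hM).unit_spec


/-! corner matrix lemmas -/

lemma std_apply (I J : Fin (n + 1)) :
    Matrix.single (0 : Fin (n + 1)) (Fin.last n) (1 : ZMod p) I J
      = if I = 0 ∧ J = Fin.last n then 1 else 0 := by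
  unfold Matrix.single
  rw [Matrix.of_apply]
  by_cases h : I = 0 ∧ J = Fin.last n
  · rw [if_pos h, if_pos ⟨h.1.symm, h.2.symm⟩]
  · rw [if_neg h, if_neg (fun hh => h ⟨hh.1.symm, hh.2.symm⟩)]

lemma corner_apply (t : ZMod p) (I J : Fin (n + 1)) :
    ((1 : Matrix (Fin (n + 1)) (Fin (n + 1)) (ZMod p))
        + t • Matrix.single (0 : Fin (n + 1)) (Fin.last n) (1 : ZMod p)) I J
      = (if I = J then 1 else 0) + (if I = 0 ∧ J = Fin.last n then t else 0) := by
  rw [Matrix.add_apply, Matrix.smul_apply, std_apply, Matrix.one_apply]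
  by_cases h : I = 0 ∧ J = Fin.last n
  · rw [if_pos h, if_pos h, smul_eq_mul, mul_one]
  · rw [if_neg h, if_neg h, smul_eq_mul, mul_zero, add_zero]

lemma val_eq_zero_iff {I : Fin (n + 1)} : I = 0 ↔ (I : ℕ) = 0 :=
  ⟨fun h => by rw [h]; rfl, fun h => Fin.ext h⟩

lemma val_eq_last_iff {I : Fin (n + 1)} : I = Fin.last n ↔ (I : ℕ) = n :=
  ⟨fun h => by rw [h]; simp, fun h => Fin.ext (by simpa using h)⟩

lemma corner_uni (hn : 0 < n) (t : ZMod p) :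
    IsUpperUnitriangular ((1 : Matrix (Fin (n + 1)) (Fin (n + 1)) (ZMod p))
      + t • Matrix.single (0 : Fin (n + 1)) (Fin.last n) (1 : ZMod p)) := by
  constructor
  · intro I J hJI
    rw [corner_apply, if_neg (fun hIJ => by rw [hIJ] at hJI; omega), if_neg]
    · ring
    · rintro ⟨h0, hl⟩
      rw [val_eq_zero_iff] at h0; rw [val_eq_last_iff] at hl
      omega
  · intro I
    rw [corner_apply, if_pos rfl, if_neg]
    · ring
    · rintro ⟨h0, hl⟩
      rw [val_eq_zero_iff] at h0; rw [val_eq_last_iff] at hl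
      omega

lemma uni_mul_corner {A : Matrix (Fin (n + 1)) (Fin (n + 1)) (ZMod p)}
    (hA : IsUpperUnitriangular A) :
    A * Matrix.single (0 : Fin (n + 1)) (Fin.last n) (1 : ZMod p)
      = Matrix.single (0 : Fin (n + 1)) (Fin.last n) (1 : ZMod p) := by
  apply Matrix.ext
  intro I J
  rw [Matrix.mul_apply, Finset.sum_eq_single (0 : Fin (n + 1))]
  · by_cases hI : I = (0 : Fin (n + 1))
    · subst hI
      rw [hA.2, one_mul]
    · rw [hA.1 I 0 (by
          have : (I : ℕ) ≠ 0 := fun hh => hI (Fin.ext hh)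
          simpa using Nat.pos_of_ne_zero this), zero_mul,
        std_apply, if_neg (fun h => hI h.1)]
  · intro l _ hl
    rw [std_apply, if_neg (fun h => hl h.1), mul_zero]
  · intro h; exact absurd (Finset.mem_univ _) h

lemma corner_mul_uni {A : Matrix (Fin (n + 1)) (Fin (n + 1)) (ZMod p)}
    (hA : IsUpperUnitriangular A) :
    Matrix.single (0 : Fin (n + 1)) (Fin.last n) (1 : ZMod p) * A
      = Matrix.single (0 : Fin (n + 1)) (Fin.last n) (1 : ZMod p) := by
  apply Matrix.ext
  intro I J
  rw [Matrix.mul_apply, Finset.sum_eq_single (Fin.last n)]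
  · by_cases hJ : J = Fin.last n
    · subst hJ
      rw [hA.2, mul_one]
    · rw [hA.1 (Fin.last n) J (by
          have h1 : (J : ℕ) ≠ n := fun hh => hJ (val_eq_last_iff.mpr hh)
          have := J.isLt
          simp only [Fin.val_last]
          omega), mul_zero,
        std_apply, if_neg (fun h => hJ h.2)]
  · intro l _ hl
    rw [std_apply, if_neg (fun h => hl h.2), zero_mul]
  · intro h; exact absurd (Finset.mem_univ _) h


/-! Z-related lemmas -/

section Zsec

variable {U : Subgroup (Matrix.GeneralLinearGroup (Fin (n + 1)) (ZMod p))}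
  (hU : ∀ g : Matrix.GeneralLinearGroup (Fin (n + 1)) (ZMod p),
    g ∈ U ↔ IsUpperUnitriangular (g : Matrix (Fin (n + 1)) (Fin (n + 1)) (ZMod p)))
  {Z : Subgroup U}
  (hZ : ∀ g : U, g ∈ Z ↔ ∃ t : ZMod p,
    ((g : Matrix.GeneralLinearGroup (Fin (n + 1)) (ZMod p)) :
        Matrix (Fin (n + 1)) (Fin (n + 1)) (ZMod p))
      = 1 + t • Matrix.single 0 (Fin.last n) (1 : ZMod p))

include hU hZ

lemma mem_Z_iff (hn : 0 < n) (u v : U) :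
    u⁻¹ * v ∈ Z ↔ ∀ I J : Fin (n + 1), ¬((I : ℕ) = 0 ∧ (J : ℕ) = n) →
      matU U v I J = matU U u I J := by
  constructor
  · intro hz I J hcor
    obtain ⟨t, ht⟩ := (hZ _).mp hz
    have ht' : matU U (u⁻¹ * v) = 1 + t • Matrix.single 0 (Fin.last n) 1 := ht
    have hmat : matU U v = matU U u * (1 + t • Matrix.single 0 (Fin.last n) 1) := by
      rw [← ht', ← matU_mul]
      exact congrArg (matU U) (by group)
    rw [hmat, mul_add, mul_one, Matrix.mul_smul, uni_mul_corner (matU_uni hU u),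
      Matrix.add_apply, Matrix.smul_apply, std_apply, if_neg, smul_eq_mul, mul_zero, add_zero]
    rintro ⟨h0, hl⟩
    rw [val_eq_zero_iff] at h0; rw [val_eq_last_iff] at hl
    exact hcor ⟨h0, hl⟩
  · intro hent
    set t : ZMod p := matU U v 0 (Fin.last n) - matU U u 0 (Fin.last n) with htdef
    have hmat : matU U v = matU U u * (1 + t • Matrix.single 0 (Fin.last n) 1) := by
      rw [mul_add, mul_one, Matrix.mul_smul, uni_mul_corner (matU_uni hU u)]
      apply Matrix.ext
      intro I J
      rw [Matrix.add_apply, Matrix.smul_apply, std_apply]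
      by_cases hc : I = 0 ∧ J = Fin.last n
      · obtain ⟨h1, h2⟩ := hc
        subst h1; subst h2
        rw [if_pos ⟨rfl, rfl⟩, smul_eq_mul, mul_one, htdef]
        ring
      · rw [if_neg hc, smul_eq_mul, mul_zero, add_zero]
        apply hent
        rintro ⟨h0, hl⟩
        rw [← val_eq_zero_iff] at h0; rw [← val_eq_last_iff] at hl
        exact hc ⟨h0, hl⟩
    have hz : u * mkU U hU _ (corner_uni hn t) = v := by
      apply matU_injective
      rw [matU_mul, matU_mkU, hmat]
    have : u⁻¹ * v = mkU U hU _ (corner_uni hn t) := by rw [← hz]; group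
    rw [this]
    exact (hZ _).mpr ⟨t, by
      have := matU_mkU U hU _ (corner_uni hn t)
      exact this⟩

lemma z_central (z : U) (hz : z ∈ Z) (g : U) : g * z = z * g := by
  apply matU_injective
  obtain ⟨t, ht⟩ := (hZ z).mp hz
  have hzmat : matU U z = 1 + t • Matrix.single 0 (Fin.last n) 1 := ht
  rw [matU_mul, matU_mul, hzmat, mul_add, add_mul, mul_one, one_mul, Matrix.mul_smul,
    Matrix.smul_mul, uni_mul_corner (matU_uni hU g), corner_mul_uni (matU_uni hU g)]

lemma z_normal : Z.Normal := by
  constructor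
  intro z hz g
  have : g * z * g⁻¹ = z := by
    rw [z_central hU hZ z hz g]
    group
  rw [this]
  exact hz

end Zsec

/-! index bookkeeping -/

def finOf (n i : ℕ) : Fin (n + 1) := ⟨min (i - 1) n, by omega⟩

lemma finOf_val {i : ℕ} (h1 : 1 ≤ i) (h2 : i ≤ n + 1) : ((finOf n i : Fin (n + 1)) : ℕ) = i - 1 := by
  simp only [finOf]
  omega

lemma sum_Ioo_conv {M : Type*} [AddCommMonoid M] {i j : ℕ} (h1 : 1 ≤ i) (h3 : j ≤ n + 1)
    (F : Fin (n + 1) → M) :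
    ∑ l ∈ Finset.Ioo (finOf n i) (finOf n j), F l = ∑ l ∈ Finset.Ioo i j, F (finOf n l) := by
  apply Finset.sum_nbij' (i := fun l : Fin (n + 1) => (l : ℕ) + 1) (j := fun l : ℕ => finOf n l)
  · intro l hl
    rw [Finset.mem_Ioo] at hl ⊢
    obtain ⟨ha, hb⟩ := hl
    rw [Fin.lt_def] at ha hb
    simp only [finOf] at ha hb
    omega
  · intro l hl
    rw [Finset.mem_Ioo] at hl ⊢
    obtain ⟨ha, hb⟩ := hl
    rw [Fin.lt_def, Fin.lt_def]
    simp only [finOf]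
    constructor <;> omega
  · intro l hl
    rw [Finset.mem_Ioo] at hl
    obtain ⟨ha, hb⟩ := hl
    rw [Fin.lt_def] at ha hb
    simp only [finOf] at ha hb
    apply Fin.ext
    simp only [finOf]
    have := l.isLt
    omega
  · intro l hl
    rw [Finset.mem_Ioo] at hl
    obtain ⟨ha, hb⟩ := hl
    simp only [finOf]
    omega
  · intro l hl
    rw [Finset.mem_Ioo] at hl
    obtain ⟨ha, hb⟩ := hl
    rw [Fin.lt_def] at ha hb
    simp only [finOf] at ha hb
    congr 1
    apply Fin.ext
    simp only [finOf]
    have := l.isLt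
    omega


/-! the matrix attached to a defining system -/

section Sys

variable {G : Type*} [Group G] [TopologicalSpace G]

def sysMat (p n : ℕ) (f : ℕ → ℕ → G → ZMod p) (c0 : G → ZMod p) (g : G) :
    Matrix (Fin (n + 1)) (Fin (n + 1)) (ZMod p) :=
  Matrix.of fun I J : Fin (n + 1) =>
    if ((I : ℕ) = (J : ℕ)) then 1
    else if ((I : ℕ) < (J : ℕ)) then
      (if ((I : ℕ) = 0 ∧ (J : ℕ) = n) then c0 g else -f ((I : ℕ) + 1) ((J : ℕ) + 1) g)
    else 0

lemma sysMat_uni (f : ℕ → ℕ → G → ZMod p) (c0 : G → ZMod p) (g : G) :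
    IsUpperUnitriangular (sysMat p n f c0 g) := by
  constructor
  · intro I J h
    simp only [sysMat, Matrix.of_apply]
    rw [if_neg (by omega), if_neg (by omega)]
  · intro I
    simp [sysMat]

lemma sysMat_apply_lt (f : ℕ → ℕ → G → ZMod p) (c0 : G → ZMod p) (g : G) {I J : Fin (n + 1)}
    (h : (I : ℕ) < (J : ℕ)) (hcor : ¬((I : ℕ) = 0 ∧ (J : ℕ) = n)) :
    sysMat p n f c0 g I J = -f ((I : ℕ) + 1) ((J : ℕ) + 1) g := by
  simp only [sysMat, Matrix.of_apply]
  rw [if_neg (by omega), if_pos h, if_neg hcor]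

lemma sysMat_apply_corner (f : ℕ → ℕ → G → ZMod p) (c0 : G → ZMod p) (g : G) (hn : 0 < n) :
    sysMat p n f c0 g 0 (Fin.last n) = c0 g := by
  simp only [sysMat, Matrix.of_apply]
  have h0 : ((0 : Fin (n + 1)) : ℕ) = 0 := rfl
  rw [if_neg (by simp [h0]; omega), if_pos (by simp [h0]; omega), if_pos (by simp [h0])]

/-- key computation: multiplicativity of `sysMat` away from the corner. -/
lemma sysMat_mul (hn : 3 ≤ n) (f : ℕ → ℕ → G → ZMod p) (a : ℕ → G → ZMod p) (c0 : G → ZMod p)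
    (ha : ∀ i : ℕ, 1 ≤ i → i ≤ n → ∀ g h : G, a i (g * h) = a i g + a i h)
    (hf2 : ∀ i : ℕ, 1 ≤ i → i ≤ n → f i (i + 1) = a i)
    (hf3 : ∀ i j : ℕ, 1 ≤ i → i + 1 < j → j ≤ n + 1 → ¬(i = 1 ∧ j = n + 1) →
      ∀ g h : G, f i j h - f i j (g * h) + f i j g = ∑ l ∈ Finset.Ioo i j, f i l g * f l j h)
    (g h : G) (I J : Fin (n + 1)) (hcor : ¬((I : ℕ) = 0 ∧ (J : ℕ) = n)) :
    sysMat p n f c0 (g * h) I J = (sysMat p n f c0 g * sysMat p n f c0 h) I J := by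
  rcases lt_trichotomy ((I : ℕ)) ((J : ℕ)) with hIJ | hIJ | hIJ
  · -- above the diagonal
    rw [uni_mul_apply (sysMat_uni f c0 g) (sysMat_uni f c0 h) (Fin.lt_def.mpr hIJ)]
    have e1 : finOf n ((I : ℕ) + 1) = I := by
      apply Fin.ext
      simp only [finOf]
      have := I.isLt
      omega
    have e2 : finOf n ((J : ℕ) + 1) = J := by
      apply Fin.ext
      simp only [finOf]
      have := J.isLt
      omega
    have hmid : ∑ l ∈ Finset.Ioo I J, sysMat p n f c0 g I l * sysMat p n f c0 h l J
        = ∑ l ∈ Finset.Ioo ((I : ℕ) + 1) ((J : ℕ) + 1), f ((I : ℕ) + 1) l g * f l ((J : ℕ) + 1) h := by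
      have step1 : ∑ l ∈ Finset.Ioo I J, sysMat p n f c0 g I l * sysMat p n f c0 h l J
          = ∑ l ∈ Finset.Ioo ((I : ℕ) + 1) ((J : ℕ) + 1),
              sysMat p n f c0 g I (finOf n l) * sysMat p n f c0 h (finOf n l) J := by
        rw [show Finset.Ioo I J = Finset.Ioo (finOf n ((I : ℕ) + 1)) (finOf n ((J : ℕ) + 1)) by
          rw [e1, e2]]
        have hJlt' := J.isLt
        have h1' : 1 ≤ (I : ℕ) + 1 := by omega
        have h3' : (J : ℕ) + 1 ≤ n + 1 := by omega
        exact sum_Ioo_conv (i := (I : ℕ) + 1) (j := (J : ℕ) + 1) h1' h3' (fun l => sysMat p n f c0 g I l * sysMat p n f c0 h l J)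
      rw [step1]
      apply Finset.sum_congr rfl
      intro l hl
      rw [Finset.mem_Ioo] at hl
      have hlval : ((finOf n l : Fin (n + 1)) : ℕ) = l - 1 :=
        finOf_val (by omega) (by have := J.isLt; omega)
      have hJlt := J.isLt
      have hIlt := I.isLt
      rw [sysMat_apply_lt f c0 g (by omega) (by omega),
        sysMat_apply_lt f c0 h (by omega) (by omega), hlval]
      have hl1 : l - 1 + 1 = l := by omega
      rw [hl1, neg_mul_neg]
    rw [hmid]
    have hJlt := J.isLt
    rcases eq_or_lt_of_le (Nat.succ_le_of_lt hIJ) with hadj | hnadj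
    · -- adjacent: J = I + 1
      have hioo : Finset.Ioo ((I : ℕ) + 1) ((J : ℕ) + 1) = ∅ := by
        apply Finset.eq_empty_iff_forall_notMem.mpr
        intro l hl
        rw [Finset.mem_Ioo] at hl
        omega
      rw [hioo, Finset.sum_empty, add_zero,
        sysMat_apply_lt f c0 (g * h) hIJ hcor,
        sysMat_apply_lt f c0 g hIJ hcor,
        sysMat_apply_lt f c0 h hIJ hcor]
      have hb1 : 1 ≤ (I : ℕ) + 1 := by omega
      have hb2 : (I : ℕ) + 1 ≤ n := by omega
      have hrw : (J : ℕ) + 1 = ((I : ℕ) + 1) + 1 := by omega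
      rw [hrw, hf2 _ hb1 hb2, ha _ hb1 hb2]
      ring
    · -- non-adjacent
      have hval := hf3 ((I : ℕ) + 1) ((J : ℕ) + 1) (by omega) (by omega) (by omega)
        (by omega) g h
      rw [sysMat_apply_lt f c0 (g * h) hIJ hcor,
        sysMat_apply_lt f c0 g hIJ hcor,
        sysMat_apply_lt f c0 h hIJ hcor]
      rw [← hval]
      ring
  · -- diagonal
    have : I = J := Fin.ext hIJ
    subst this
    rw [(uni_mul (sysMat_uni f c0 g) (sysMat_uni f c0 h)).2 I, (sysMat_uni f c0 (g * h)).2 I]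
  · -- below the diagonal
    rw [(uni_mul (sysMat_uni f c0 g) (sysMat_uni f c0 h)).1 I J hIJ,
      (sysMat_uni f c0 (g * h)).1 I J hIJ]

/-- corner entry multiplicativity, given the vanishing witness. -/
lemma sysMat_mul_corner (hn : 3 ≤ n) (f : ℕ → ℕ → G → ZMod p) (c : G → ZMod p)
    (hval : ∀ g h : G, (∑ k ∈ Finset.Ioo 1 (n + 1), f 1 k g * f k (n + 1) h)
      = c h - c (g * h) + c g)
    (g h : G) :
    sysMat p n f (fun x => -c x) (g * h) 0 (Fin.last n)
      = (sysMat p n f (fun x => -c x) g * sysMat p n f (fun x => -c x) h) 0 (Fin.last n) := by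
  set c0 : G → ZMod p := fun x => -c x with hc0
  have h0l : ((0 : Fin (n + 1)) : ℕ) < ((Fin.last n : Fin (n + 1)) : ℕ) := by
    simp [Fin.val_last]; omega
  rw [uni_mul_apply (sysMat_uni f c0 g) (sysMat_uni f c0 h) (Fin.lt_def.mpr h0l)]
  have e1 : finOf n 1 = (0 : Fin (n + 1)) := by
    apply Fin.ext; simp [finOf]
  have e2 : finOf n (n + 1) = Fin.last n := by
    apply Fin.ext; simp [finOf]
  have hmid : ∑ l ∈ Finset.Ioo (0 : Fin (n + 1)) (Fin.last n),
      sysMat p n f c0 g 0 l * sysMat p n f c0 h l (Fin.last n)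
      = ∑ l ∈ Finset.Ioo 1 (n + 1), f 1 l g * f l (n + 1) h := by
    have step1 : ∑ l ∈ Finset.Ioo (0 : Fin (n + 1)) (Fin.last n),
        sysMat p n f c0 g 0 l * sysMat p n f c0 h l (Fin.last n)
        = ∑ l ∈ Finset.Ioo 1 (n + 1),
            sysMat p n f c0 g 0 (finOf n l) * sysMat p n f c0 h (finOf n l) (Fin.last n) := by
      rw [show Finset.Ioo (0 : Fin (n + 1)) (Fin.last n)
            = Finset.Ioo (finOf n 1) (finOf n (n + 1)) by rw [e1, e2]]
      have h1' : 1 ≤ 1 := le_refl 1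
      have h3' : n + 1 ≤ n + 1 := le_refl _
      exact sum_Ioo_conv (i := 1) (j := n + 1) h1' h3' (fun l => sysMat p n f c0 g 0 l * sysMat p n f c0 h l (Fin.last n))
    rw [step1]
    apply Finset.sum_congr rfl
    intro l hl
    rw [Finset.mem_Ioo] at hl
    have hlval : ((finOf n l : Fin (n + 1)) : ℕ) = l - 1 := finOf_val (by omega) (by omega)
    have hz : ((0 : Fin (n + 1)) : ℕ) = 0 := rfl
    have hlast : ((Fin.last n : Fin (n + 1)) : ℕ) = n := Fin.val_last n
    rw [sysMat_apply_lt f c0 g (by omega) (by omega),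
      sysMat_apply_lt f c0 h (by omega) (by omega), hlval, hz, hlast]
    have hl1 : l - 1 + 1 = l := by omega
    rw [hl1, zero_add, neg_mul_neg]
  rw [hmid, hval g h, sysMat_apply_corner f c0 (g * h) (by omega),
    sysMat_apply_corner f c0 g (by omega), sysMat_apply_corner f c0 h (by omega), hc0]
  ring

end Sys


/-! extracting a defining system from a (partial) homomorphism into U -/

section Extract

variable {G : Type*} [Group G] [TopologicalSpace G]
variable {U : Subgroup (Matrix.GeneralLinearGroup (Fin (n + 1)) (ZMod p))}
  (hU : ∀ g : Matrix.GeneralLinearGroup (Fin (n + 1)) (ZMod p),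
    g ∈ U ↔ IsUpperUnitriangular (g : Matrix (Fin (n + 1)) (Fin (n + 1)) (ZMod p)))

include hU

/-- ∂-relations for the entry system of a map multiplicative away from the corner. -/
lemma entries_d3 (τ : G → U)
    (hτ : ∀ g h : G, ∀ I J : Fin (n + 1), ¬((I : ℕ) = 0 ∧ (J : ℕ) = n) →
      matU U (τ (g * h)) I J = (matU U (τ g) * matU U (τ h)) I J)
    (i j : ℕ) (h1 : 1 ≤ i) (h2 : i + 1 < j) (h3 : j ≤ n + 1) (h4 : ¬(i = 1 ∧ j = n + 1))
    (g h : G) :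
    -(matU U (τ h) (finOf n i) (finOf n j)) - -(matU U (τ (g * h)) (finOf n i) (finOf n j))
        + -(matU U (τ g) (finOf n i) (finOf n j))
      = ∑ l ∈ Finset.Ioo i j,
          (-(matU U (τ g) (finOf n i) (finOf n l))) * (-(matU U (τ h) (finOf n l) (finOf n j))) := by
  have hI : ((finOf n i : Fin (n + 1)) : ℕ) = i - 1 := finOf_val h1 (by omega)
  have hJ : ((finOf n j : Fin (n + 1)) : ℕ) = j - 1 := finOf_val (by omega) h3
  have hcor : ¬(((finOf n i : Fin (n + 1)) : ℕ) = 0 ∧ ((finOf n j : Fin (n + 1)) : ℕ) = n) := by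
    rw [hI, hJ]; omega
  have hlt : finOf n i < finOf n j := by rw [Fin.lt_def, hI, hJ]; omega
  have key := hτ g h _ _ hcor
  rw [uni_mul_apply (matU_uni hU _) (matU_uni hU _) hlt,
    sum_Ioo_conv h1 h3 (fun l => matU U (τ g) (finOf n i) l * matU U (τ h) l (finOf n j))]
    at key
  rw [key]
  rw [show ∑ l ∈ Finset.Ioo i j,
        (-(matU U (τ g) (finOf n i) (finOf n l))) * (-(matU U (τ h) (finOf n l) (finOf n j)))
      = ∑ l ∈ Finset.Ioo i j,
        (matU U (τ g) (finOf n i) (finOf n l)) * (matU U (τ h) (finOf n l) (finOf n j)) from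
    Finset.sum_congr rfl (fun l _ => neg_mul_neg _ _)]
  ring

/-- additivity of superdiagonal entries. -/
lemma entries_d2 (τ : G → U)
    (hτ : ∀ g h : G, ∀ I J : Fin (n + 1), ¬((I : ℕ) = 0 ∧ (J : ℕ) = n) →
      matU U (τ (g * h)) I J = (matU U (τ g) * matU U (τ h)) I J)
    (hn : 3 ≤ n) (i : ℕ) (h1 : 1 ≤ i) (h2 : i ≤ n) (g h : G) :
    -(matU U (τ (g * h)) (finOf n i) (finOf n (i + 1)))
      = -(matU U (τ g) (finOf n i) (finOf n (i + 1)))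
        + -(matU U (τ h) (finOf n i) (finOf n (i + 1))) := by
  have hI : ((finOf n i : Fin (n + 1)) : ℕ) = i - 1 := finOf_val h1 (by omega)
  have hJ : ((finOf n (i + 1) : Fin (n + 1)) : ℕ) = i := by
    rw [finOf_val (by omega) (by omega)]
    omega
  have hcor : ¬(((finOf n i : Fin (n + 1)) : ℕ) = 0
      ∧ ((finOf n (i + 1) : Fin (n + 1)) : ℕ) = n) := by
    rw [hI, hJ]; omega
  have hlt : finOf n i < finOf n (i + 1) := by rw [Fin.lt_def, hI, hJ]; omega
  have key := hτ g h _ _ hcor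
  rw [uni_mul_apply (matU_uni hU _) (matU_uni hU _) hlt] at key
  have hempty : Finset.Ioo (finOf n i) (finOf n (i + 1)) = ∅ := by
    apply Finset.eq_empty_iff_forall_notMem.mpr
    intro l hl
    rw [Finset.mem_Ioo, Fin.lt_def, Fin.lt_def, hI, hJ] at hl
    omega
  rw [hempty, Finset.sum_empty, add_zero] at key
  rw [key]
  ring

/-- the corner cocycle relation for an actual homomorphism. -/
lemma entries_corner (τ : G → U) (hn : 3 ≤ n)
    (hτfull : ∀ g h : G, ∀ I J : Fin (n + 1),
      matU U (τ (g * h)) I J = (matU U (τ g) * matU U (τ h)) I J)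
    (g h : G) :
    ∑ k ∈ Finset.Ioo 1 (n + 1),
        (-(matU U (τ g) (finOf n 1) (finOf n k))) * (-(matU U (τ h) (finOf n k) (finOf n (n + 1))))
      = (-(matU U (τ h) (finOf n 1) (finOf n (n + 1))))
        - (-(matU U (τ (g * h)) (finOf n 1) (finOf n (n + 1))))
        + (-(matU U (τ g) (finOf n 1) (finOf n (n + 1)))) := by
  have hI : ((finOf n 1 : Fin (n + 1)) : ℕ) = 0 := by rw [finOf_val (by omega) (by omega)]
  have hJ : ((finOf n (n + 1) : Fin (n + 1)) : ℕ) = n := by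
    rw [finOf_val (by omega) (by omega)]
    omega
  have hlt : finOf n 1 < finOf n (n + 1) := by rw [Fin.lt_def, hI, hJ]; omega
  have key := hτfull g h (finOf n 1) (finOf n (n + 1))
  rw [uni_mul_apply (matU_uni hU _) (matU_uni hU _) hlt,
    sum_Ioo_conv (le_refl 1) (le_refl (n + 1))
      (fun l => matU U (τ g) (finOf n 1) l * matU U (τ h) l (finOf n (n + 1)))] at key
  rw [show ∑ k ∈ Finset.Ioo 1 (n + 1),
        (-(matU U (τ g) (finOf n 1) (finOf n k))) * (-(matU U (τ h) (finOf n k) (finOf n (n + 1))))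
      = ∑ k ∈ Finset.Ioo 1 (n + 1),
        (matU U (τ g) (finOf n 1) (finOf n k)) * (matU U (τ h) (finOf n k) (finOf n (n + 1))) from
    Finset.sum_congr rfl (fun l _ => neg_mul_neg _ _), key]
  ring

end Extract

/-! continuity helpers -/

section Cont

variable {X : Type*} [TopologicalSpace X]
variable {G : Type*} [Group G] [TopologicalSpace G]

lemma cont_of_matU {U : Subgroup (Matrix.GeneralLinearGroup (Fin (n + 1)) (ZMod p))}
    (τ : X → U) (hcont : Continuous fun x => matU U (τ x)) : Continuous τ := by
  classical
  have hinj := matU_injective (p := p) (n := n) U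
  let Ψ : Matrix (Fin (n + 1)) (Fin (n + 1)) (ZMod p) → U := fun M =>
    if h : ∃ u : U, matU U u = M then h.choose else 1
  have hτΨ : τ = Ψ ∘ (fun x => matU U (τ x)) := by
    funext x
    simp only [Ψ, Function.comp_apply]
    rw [dif_pos ⟨τ x, rfl⟩]
    exact (hinj (⟨τ x, rfl⟩ : ∃ u : U, matU U u = matU U (τ x)).choose_spec).symm
  rw [hτΨ]
  exact continuous_of_discreteTopology.comp hcont

lemma matU_cont {U : Subgroup (Matrix.GeneralLinearGroup (Fin (n + 1)) (ZMod p))}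
    (τ : X → U) (hτ : Continuous τ) (I J : Fin (n + 1)) :
    Continuous fun x => matU U (τ x) I J :=
  (continuous_of_discreteTopology (α := U)
    (f := fun u : U => matU U u I J)).comp hτ

lemma sysMat_cont (f : ℕ → ℕ → G → ZMod p) (c0 : G → ZMod p)
    (hf : ∀ I J : Fin (n + 1), (I : ℕ) < (J : ℕ) → ¬((I : ℕ) = 0 ∧ (J : ℕ) = n) →
      Continuous (f ((I : ℕ) + 1) ((J : ℕ) + 1)))
    (hc : Continuous c0) : Continuous fun g => sysMat p n f c0 g := by
  apply continuous_matrix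
  intro I J
  simp only [sysMat, Matrix.of_apply]
  split_ifs with hd hlt hcor
  · exact continuous_const
  · exact hc
  · exact (hf I J hlt hcor).neg
  · exact continuous_const

end Cont

end MasseyAux


/-- **Lemma 4.2.**  Let `G` be a profinite group, `p` a prime and `n ≥ 3`.  The following
are equivalent:
(1) `G` has the vanishing `n`-fold Massey product property with respect to `F_p`;
(2) for every quotient model `q : U_{n+1}(F_p) → Ū_{n+1}(F_p) = U_{n+1}(F_p)/Z_{n+1}(F_p)`
(a surjection whose kernel is the subgroup `Z_{n+1}(F_p)` of matrices with all
off-diagonal entries `0` except possibly at the position `(1,n+1)`) and every continuous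
homomorphism `ρ̄ : G → Ū_{n+1}(F_p)`, the continuous homomorphism
`(ρ̄₁₂, …, ρ̄_{n,n+1}) : G → F_pⁿ` lifts through the quotient map
`U_{n+1}(F_p) → F_pⁿ` (recording the superdiagonal entries) to a continuous homomorphism
`ρ : G → U_{n+1}(F_p)`, i.e. there is a continuous `ρ : G →* U_{n+1}(F_p)` whose
superdiagonal entries agree with those of (any lift of) `ρ̄`. -/
theorem vanishing_massey_iff_embedding_problems_solvable
    (p : ℕ) [Fact p.Prime] (n : ℕ) (hn : 3 ≤ n)
    (G : Type*) [Group G] [TopologicalSpace G] [IsTopologicalGroup G]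
    [CompactSpace G] [TotallyDisconnectedSpace G] [T2Space G]
    (U : Subgroup (Matrix.GeneralLinearGroup (Fin (n + 1)) (ZMod p)))
    (hU : ∀ g : Matrix.GeneralLinearGroup (Fin (n + 1)) (ZMod p),
      g ∈ U ↔ IsUpperUnitriangular (g : Matrix (Fin (n + 1)) (Fin (n + 1)) (ZMod p)))
    (Z : Subgroup U)
    (hZ : ∀ g : U, g ∈ Z ↔ ∃ t : ZMod p,
      ((g : Matrix.GeneralLinearGroup (Fin (n + 1)) (ZMod p)) :
          Matrix (Fin (n + 1)) (Fin (n + 1)) (ZMod p))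
        = 1 + t • Matrix.single 0 (Fin.last n) (1 : ZMod p)) :
    HasVanishingMasseyProduct G p n ↔
    (∀ (Ubar : Type) (_ : Group Ubar) (_ : TopologicalSpace Ubar)
        (_ : DiscreteTopology Ubar) (q : U →* Ubar),
      Function.Surjective q → q.ker = Z →
      ∀ ρbar : G →* Ubar, Continuous ρbar →
        ∃ ρ : G →* U, Continuous ρ ∧
          ∀ g : G, ∀ u : U, q u = ρbar g → ∀ i : Fin n,
            ((ρ g : Matrix.GeneralLinearGroup (Fin (n + 1)) (ZMod p)) :
                Matrix (Fin (n + 1)) (Fin (n + 1)) (ZMod p)) i.castSucc i.succ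
              = ((u : Matrix.GeneralLinearGroup (Fin (n + 1)) (ZMod p)) :
                  Matrix (Fin (n + 1)) (Fin (n + 1)) (ZMod p)) i.castSucc i.succ) := by
    classical
  constructor
  · -- (1) ⇒ (2)
    intro hvan Ubar instG instT instD q hqsurj hker ρbar hρbar
    -- a set-theoretic lift of ρbar
    set σ : G → U := fun g => (hqsurj (ρbar g)).choose with hσdef
    have hσ : ∀ g, q (σ g) = ρbar g := fun g => (hqsurj (ρbar g)).choose_spec
    have hσcont : Continuous σ := by
      have hcomp : σ = (fun b : Ubar => (hqsurj b).choose) ∘ ρbar := rfl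
      rw [hcomp]
      exact Continuous.comp continuous_of_discreteTopology hρbar
    -- σ is multiplicative away from the corner
    have hτ : ∀ g h : G, ∀ I J : Fin (n + 1), ¬((I : ℕ) = 0 ∧ (J : ℕ) = n) →
        MasseyAux.matU U (σ (g * h)) I J
          = (MasseyAux.matU U (σ g) * MasseyAux.matU U (σ h)) I J := by
      intro g h I J hcor
      have hzmem : (σ g * σ h)⁻¹ * σ (g * h) ∈ Z := by
        rw [← hker, MonoidHom.mem_ker, _root_.map_mul, map_inv, _root_.map_mul, hσ, hσ, hσ,
          show ρbar (g * h) = ρbar g * ρbar h from _root_.map_mul ρbar g h]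
        group
      have hent := (MasseyAux.mem_Z_iff hU hZ (by omega) (σ g * σ h) (σ (g * h))).mp
        hzmem I J hcor
      rw [hent, MasseyAux.matU_mul]
    -- the induced defining system and its classes
    set F : ℕ → ℕ → G → ZMod p := fun i j g =>
      -(MasseyAux.matU U (σ g) (MasseyAux.finOf n i) (MasseyAux.finOf n j)) with hFdef
    set a : ℕ → G → ZMod p := fun i => F i (i + 1) with hadef
    have haprop : ∀ i : ℕ, 1 ≤ i → i ≤ n → Continuous (a i) ∧
        ∀ g h : G, a i (g * h) = a i g + a i h := by
      intro i h1 h2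
      refine ⟨(MasseyAux.matU_cont σ hσcont _ _).neg, ?_⟩
      intro g h
      exact MasseyAux.entries_d2 hU σ hτ hn i h1 h2 g h
    have hFcont : ∀ i j : ℕ, 1 ≤ i → i < j → j ≤ n + 1 → ¬(i = 1 ∧ j = n + 1) →
        Continuous (F i j) := by
      intro i j _ _ _ _
      exact (MasseyAux.matU_cont σ hσcont _ _).neg
    have hFd3 : ∀ i j : ℕ, 1 ≤ i → i + 1 < j → j ≤ n + 1 → ¬(i = 1 ∧ j = n + 1) →
        ∀ g h : G, F i j h - F i j (g * h) + F i j g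
          = ∑ l ∈ Finset.Ioo i j, F i l g * F l j h := by
      intro i j h1 h2 h3 h4 g h
      exact MasseyAux.entries_d3 hU σ hτ i j h1 h2 h3 h4 g h
    obtain ⟨f', hf', c, hccont, hval⟩ :=
      hvan a haprop ⟨F, hFcont, fun i _ _ => rfl, hFd3⟩
    -- build the lift ρ from the vanishing defining system
    have hρuni : ∀ g : G, IsUpperUnitriangular (MasseyAux.sysMat p n f' (fun
        x => -c x) g) := fun g => MasseyAux.sysMat_uni f' _ g
    set ρfun : G → U := fun g => MasseyAux.mkU U hU _ (hρuni g) with hρfundef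
    have hρval : ∀ g, MasseyAux.matU U (ρfun g)
        = MasseyAux.sysMat p n f' (fun x => -c x) g :=
      fun g => MasseyAux.matU_mkU U hU _ (hρuni g)
    have hρmul : ∀ g h : G, ρfun (g * h) = ρfun g * ρfun h := by
      intro g h
      apply MasseyAux.matU_injective U
      rw [MasseyAux.matU_mul, hρval, hρval, hρval]
      apply Matrix.ext
      intro I J
      by_cases hcor : (I : ℕ) = 0 ∧ (J : ℕ) = n
      · have hI0 : I = 0 := MasseyAux.val_eq_zero_iff.mpr hcor.1
        have hJl : J = Fin.last n := MasseyAux.val_eq_last_iff.mpr hcor.2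
        rw [hI0, hJl]
        exact MasseyAux.sysMat_mul_corner hn f' c hval g h
      · exact MasseyAux.sysMat_mul hn f' a (fun x => -c x)
          (fun i hi1 hi2 => (haprop i hi1 hi2).2) hf'.2.1 hf'.2.2 g h I J hcor
    refine ⟨MonoidHom.mk' ρfun hρmul, ?_, ?_⟩
    · -- continuity of ρ
      apply MasseyAux.cont_of_matU
      refine (MasseyAux.sysMat_cont f' (fun x => -c x) ?_ hccont.neg).congr
        (fun x => (hρval x).symm)
      intro I J hlt hcor
      have hJlt := J.isLt
      exact hf'.1 ((I : ℕ) + 1) ((J : ℕ) + 1) (by omega) (by omega) (by omega)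
        (by rintro ⟨e1, e2⟩; exact hcor ⟨by omega, by omega⟩)
    · -- the superdiagonal entries agree
      intro g u hqu i
      have hcorIJ : ¬(((i.castSucc : Fin (n + 1)) : ℕ) = 0
          ∧ ((i.succ : Fin (n + 1)) : ℕ) = n) := by
        have h1 : ((i.castSucc : Fin (n + 1)) : ℕ) = (i : ℕ) := Fin.coe_castSucc i
        have h2 : ((i.succ : Fin (n + 1)) : ℕ) = (i : ℕ) + 1 := Fin.val_succ i
        rw [h1, h2]
        rintro ⟨e1, e2⟩
        omega
      have hz : (σ g)⁻¹ * u ∈ Z := by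
        rw [← hker, MonoidHom.mem_ker, _root_.map_mul, map_inv, hσ, hqu]
        group
      have hu := (MasseyAux.mem_Z_iff hU hZ (by omega) (σ g) u).mp hz
        i.castSucc i.succ hcorIJ
      show MasseyAux.matU U (ρfun g) i.castSucc i.succ = MasseyAux.matU U u i.castSucc i.succ
      rw [hρval, hu]
      have hIval : ((i.castSucc : Fin (n + 1)) : ℕ) = (i : ℕ) := Fin.coe_castSucc i
      have hJval : ((i.succ : Fin (n + 1)) : ℕ) = (i : ℕ) + 1 := Fin.val_succ i
      have hilt := i.isLt
      rw [MasseyAux.sysMat_apply_lt f' _ g (by omega) hcorIJ]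
      have hsd : f' (((i.castSucc : Fin (n + 1)) : ℕ) + 1) (((i.succ : Fin (n + 1)) : ℕ) + 1)
          = a (((i.castSucc : Fin (n + 1)) : ℕ) + 1) := by
        exact hf'.2.1 (((i.castSucc : Fin (n + 1)) : ℕ) + 1) (by omega) (by omega)
      rw [hsd]
      have he1 : MasseyAux.finOf n (((i.castSucc : Fin (n + 1)) : ℕ) + 1) = i.castSucc := by
        apply Fin.ext
        simp only [MasseyAux.finOf, hIval]
        omega
      have he2 : MasseyAux.finOf n (((i.castSucc : Fin (n + 1)) : ℕ) + 1 + 1) = i.succ := by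
        apply Fin.ext
        simp only [MasseyAux.finOf, hIval, hJval]
        omega
      show -(-(MasseyAux.matU U (σ g) _ _)) = _
      rw [he1, he2, neg_neg]
  · -- (2) ⇒ (1)
    intro hsolv a ha hdef
    obtain ⟨f, hf⟩ := hdef
    haveI hZn : Z.Normal := MasseyAux.z_normal hU hZ
    -- the matrix-valued map attached to the defining system
    have hσuni : ∀ g : G, IsUpperUnitriangular
        (MasseyAux.sysMat p n f (fun _ => (0 : ZMod p)) g) :=
      fun g => MasseyAux.sysMat_uni f _ g
    set σ : G → U := fun g => MasseyAux.mkU U hU _ (hσuni g) with hσdef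
    have hσval : ∀ g, MasseyAux.matU U (σ g)
        = MasseyAux.sysMat p n f (fun _ => (0 : ZMod p)) g :=
      fun g => MasseyAux.matU_mkU U hU _ (hσuni g)
    have hσcont : Continuous σ := by
      apply MasseyAux.cont_of_matU
      refine (MasseyAux.sysMat_cont f (fun _ => (0 : ZMod p)) ?_ continuous_const).congr
        (fun x => (hσval x).symm)
      intro I J hlt hcor
      have hJlt := J.isLt
      exact hf.1 ((I : ℕ) + 1) ((J : ℕ) + 1) (by omega) (by omega) (by omega)
        (by rintro ⟨e1, e2⟩; exact hcor ⟨by omega, by omega⟩)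
    have hτ : ∀ g h : G, ∀ I J : Fin (n + 1), ¬((I : ℕ) = 0 ∧ (J : ℕ) = n) →
        MasseyAux.matU U (σ (g * h)) I J
          = (MasseyAux.matU U (σ g) * MasseyAux.matU U (σ h)) I J := by
      intro g h I J hcor
      rw [hσval, hσval, hσval]
      exact MasseyAux.sysMat_mul hn f a (fun _ => (0 : ZMod p))
        (fun i hi1 hi2 => (ha i hi1 hi2).2) hf.2.1 hf.2.2 g h I J hcor
    have hρbarmul : ∀ g h : G, QuotientGroup.mk' Z (σ (g * h))
        = QuotientGroup.mk' Z (σ g) * QuotientGroup.mk' Z (σ h) := by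
      intro g h
      rw [← _root_.map_mul]
      have hmem : (σ g * σ h)⁻¹ * σ (g * h) ∈ Z :=
        (MasseyAux.mem_Z_iff hU hZ (by omega) (σ g * σ h) (σ (g * h))).mpr
          (fun I J hcor => by rw [hτ g h I J hcor, MasseyAux.matU_mul])
      have hmem' : (σ (g * h))⁻¹ * (σ g * σ h) ∈ Z := by
        have := Z.inv_mem hmem
        rwa [_root_.mul_inv_rev, inv_inv] at this
      exact QuotientGroup.eq.mpr hmem'
    haveI hQdisc : DiscreteTopology (U ⧸ Z) := by
      apply discreteTopology_iff_isOpen_singleton.mpr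
      intro q0
      have hpre : IsOpen ((QuotientGroup.mk : U → U ⧸ Z) ⁻¹' {q0}) := isOpen_discrete _
      exact isOpen_coinduced.mpr hpre
    obtain ⟨ρ, hρcont, hρmatch⟩ := hsolv (U ⧸ Z) inferInstance inferInstance
      hQdisc (QuotientGroup.mk' Z)
      (QuotientGroup.mk'_surjective Z) (QuotientGroup.ker_mk' Z)
      (MonoidHom.mk' (fun g => QuotientGroup.mk' Z (σ g)) hρbarmul)
      (by
        have hc : Continuous ((fun u : U => QuotientGroup.mk' Z u) ∘ σ) :=
          Continuous.comp continuous_of_discreteTopology hσcont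
        exact hc)
    have hτfull : ∀ g h : G, ∀ I J : Fin (n + 1),
        MasseyAux.matU U (ρ (g * h)) I J
          = (MasseyAux.matU U (ρ g) * MasseyAux.matU U (ρ h)) I J := by
      intro g h I J
      rw [show ρ (g * h) = ρ g * ρ h from _root_.map_mul ρ g h, MasseyAux.matU_mul]
    refine ⟨fun i j g => -(MasseyAux.matU U (ρ g) (MasseyAux.finOf n i) (MasseyAux.finOf n j)),
      ⟨?_, ?_, ?_⟩,
      fun g => -(MasseyAux.matU U (ρ g) (MasseyAux.finOf n 1) (MasseyAux.finOf n (n + 1))),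
      ?_, ?_⟩
    · intro i j _ _ _ _
      exact (MasseyAux.matU_cont (fun g => ρ g) hρcont _ _).neg
    · -- the superdiagonal entries represent the aᵢ
      intro i h1 h2
      funext g
      show -(MasseyAux.matU U (ρ g) (MasseyAux.finOf n i) (MasseyAux.finOf n (i + 1))) = a i g
      have hiF : i - 1 < n := by omega
      have hmatch := hρmatch g (σ g) rfl ⟨i - 1, hiF⟩
      have he1 : MasseyAux.finOf n i = (Fin.castSucc ⟨i - 1, hiF⟩ : Fin (n + 1)) := by
        apply Fin.ext
        simp only [MasseyAux.finOf, Fin.coe_castSucc]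
        omega
      have he2 : MasseyAux.finOf n (i + 1) = (Fin.succ ⟨i - 1, hiF⟩ : Fin (n + 1)) := by
        apply Fin.ext
        simp only [MasseyAux.finOf, Fin.val_succ]
        omega
      have hem : MasseyAux.matU U (ρ g) (MasseyAux.finOf n i) (MasseyAux.finOf n (i + 1))
          = MasseyAux.matU U (σ g) (MasseyAux.finOf n i) (MasseyAux.finOf n (i + 1)) := by
        rw [he1, he2]
        exact hmatch
      rw [hem, hσval]
      have hIval : ((MasseyAux.finOf n i : Fin (n + 1)) : ℕ) = i - 1 :=
        MasseyAux.finOf_val h1 (by omega)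
      have hJval : ((MasseyAux.finOf n (i + 1) : Fin (n + 1)) : ℕ) = i := by
        rw [MasseyAux.finOf_val (by omega) (by omega)]
        omega
      rw [MasseyAux.sysMat_apply_lt f _ g (by omega) (by rw [hIval, hJval]; rintro ⟨e1, e2⟩; omega)]
      rw [neg_neg, hIval, hJval]
      have : i - 1 + 1 = i := by omega
      rw [this, hf.2.1 i h1 h2]
    · -- ∂-relations
      intro i j h1 h2 h3 h4 g h
      exact MasseyAux.entries_d3 hU (fun g => ρ g)
        (fun g h I J _ => hτfull g h I J) i j h1 h2 h3 h4 g h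
    · exact (MasseyAux.matU_cont (fun g => ρ g) hρcont _ _).neg
    · intro g h
      exact MasseyAux.entries_corner hU (fun g => ρ g) hn hτfull g h
end

section
/- Let G be a profinite group and p a prime. Let χ_1, χ_2, χ_3 ∈ H^1(G, F_p) be F_p-linearly independent. Assume that G has the vanishing triple Massey product property with respect to F_p and that χ_1 ∪ χ_2 = χ_2 ∪ χ_3 = 0 in H^2(G, F_p). Then there is a continuous surjective homomorphism ρ: G → U_4(F_p) such that ρ_{12} = χ_1, ρ_{23} = χ_2 and ρ_{34} = χ_3. -/
open Matrix

/-- A topological group `G` has the *vanishing triple Massey product property* with respect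
to `F_p` if every defined triple Massey product `⟨χ₁,χ₂,χ₃⟩` of elements
`χ₁, χ₂, χ₃ ∈ H¹(G,F_p)` (continuous homomorphisms `G → F_p`) contains `0`.  Here a
defining system consists of continuous 1-cochains `a₁₃, a₂₄` with
`∂a₁₃ = χ₁ ∪ χ₂` and `∂a₂₄ = χ₂ ∪ χ₃` (where `(∂a)(g,h) = a(h) − a(gh) + a(g)` and
`(χ ∪ χ')(g,h) = χ(g)·χ'(h)`), and the value of the product relative to it is the class of
the 2-cocycle `χ₁ ∪ a₂₄ + a₁₃ ∪ χ₃`; the product contains `0` precisely when for some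
defining system this value is the coboundary of a continuous 1-cochain. -/
def HasVanishingTripleMasseyProduct (G : Type*) [Group G] [TopologicalSpace G]
    (p : ℕ) : Prop :=
  ∀ χ₁ χ₂ χ₃ : G → ZMod p,
    (Continuous χ₁ ∧ ∀ g h : G, χ₁ (g * h) = χ₁ g + χ₁ h) →
    (Continuous χ₂ ∧ ∀ g h : G, χ₂ (g * h) = χ₂ g + χ₂ h) →
    (Continuous χ₃ ∧ ∀ g h : G, χ₃ (g * h) = χ₃ g + χ₃ h) →
    -- if the triple Massey product ⟨χ₁,χ₂,χ₃⟩ is defined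
    (∃ a₁₃ a₂₄ : G → ZMod p, Continuous a₁₃ ∧ Continuous a₂₄ ∧
      (∀ g h : G, a₁₃ h - a₁₃ (g * h) + a₁₃ g = χ₁ g * χ₂ h) ∧
      (∀ g h : G, a₂₄ h - a₂₄ (g * h) + a₂₄ g = χ₂ g * χ₃ h)) →
    -- then it contains 0
    ∃ a₁₃ a₂₄ c : G → ZMod p, Continuous a₁₃ ∧ Continuous a₂₄ ∧ Continuous c ∧
      (∀ g h : G, a₁₃ h - a₁₃ (g * h) + a₁₃ g = χ₁ g * χ₂ h) ∧
      (∀ g h : G, a₂₄ h - a₂₄ (g * h) + a₂₄ g = χ₂ g * χ₃ h) ∧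
      (∀ g h : G, χ₁ g * a₂₄ h + a₁₃ g * χ₃ h = c h - c (g * h) + c g)

def M6 {R : Type*} [CommRing R] (a b c d e f : R) : Matrix (Fin 4) (Fin 4) R :=
  !![1,a,d,f; 0,1,b,e; 0,0,1,c; 0,0,0,1]

theorem M6_mul {R : Type*} [CommRing R] (a b c d e f a' b' c' d' e' f' : R) :
    M6 a b c d e f * M6 a' b' c' d' e' f' =
      M6 (a+a') (b+b') (c+c') (d+d'+a*b') (e+e'+b*c') (f+f'+a*e'+d*c') := by
  ext i j
  fin_cases i <;> fin_cases j <;>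
    simp [M6, Matrix.mul_apply, Fin.sum_univ_four, Matrix.vecHead, Matrix.vecTail] <;> ring

theorem M6_congr {R : Type*} [CommRing R] {a b c d e f a' b' c' d' e' f' : R}
    (h1 : a = a') (h2 : b = b') (h3 : c = c') (h4 : d = d') (h5 : e = e') (h6 : f = f') :
    M6 a b c d e f = M6 a' b' c' d' e' f' := by
  subst h1 h2 h3 h4 h5 h6; rfl

theorem M6_one {R : Type*} [CommRing R] : (M6 0 0 0 0 0 0 : Matrix (Fin 4) (Fin 4) R) = 1 := by
  ext i j
  fin_cases i <;> fin_cases j <;> simp [M6, Matrix.one_apply, Matrix.vecHead, Matrix.vecTail]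

theorem M6_mul_inv {R : Type*} [CommRing R] (a b c d e f : R) :
    M6 a b c d e f * M6 (-a) (-b) (-c) (a*b-d) (b*c-e) (a*e+d*c-a*b*c-f) = 1 := by
  rw [M6_mul, ← M6_one]
  exact M6_congr (by ring) (by ring) (by ring) (by ring) (by ring) (by ring)

theorem M6_low_pow {R : Type*} [CommRing R] (d e f : R) (n : ℕ) :
    (M6 0 0 0 d e f) ^ n = M6 0 0 0 (n * d) (n * e) (n * f) := by
  induction n with
  | zero => simpa using M6_one.symm
  | succ n ih =>
    rw [pow_succ, ih, M6_mul]
    exact M6_congr (by ring) (by ring) (by ring) (by push_cast; ring) (by push_cast; ring)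
      (by push_cast; ring)

section Phi

variable {p : ℕ} {G : Type*} [Group G] (χ₁ χ₂ χ₃ A B C : G → ZMod p)

/-- The candidate homomorphism, on the matrix level. -/
def Phi (g : G) : Matrix (Fin 4) (Fin 4) (ZMod p) :=
  M6 (χ₁ g) (χ₂ g) (χ₃ g) (-A g) (-B g) (C g)

theorem hom_one {χ : G → ZMod p} (hm : ∀ g h : G, χ (g * h) = χ g + χ h) : χ 1 = 0 := by
  have h := hm 1 1
  rw [mul_one] at h
  exact add_left_cancel (a := χ 1) (by rw [add_zero]; exact h.symm)

theorem hom_pow {χ : G → ZMod p} (hm : ∀ g h : G, χ (g * h) = χ g + χ h) (g : G) (n : ℕ) :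
    χ (g ^ n) = n * χ g := by
  induction n with
  | zero => simpa using hom_one hm
  | succ n ih => rw [pow_succ, hm, ih]; push_cast; ring

variable
  (hm₁ : ∀ g h : G, χ₁ (g * h) = χ₁ g + χ₁ h)
  (hm₂ : ∀ g h : G, χ₂ (g * h) = χ₂ g + χ₂ h)
  (hm₃ : ∀ g h : G, χ₃ (g * h) = χ₃ g + χ₃ h)
  (hA : ∀ g h : G, A h - A (g * h) + A g = χ₁ g * χ₂ h)
  (hB : ∀ g h : G, B h - B (g * h) + B g = χ₂ g * χ₃ h)
  (hC : ∀ g h : G, χ₁ g * B h + A g * χ₃ h = C h - C (g * h) + C g)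

include hm₁ hm₂ hm₃ hA hB hC

theorem Phi_mul (g h : G) :
    Phi χ₁ χ₂ χ₃ A B C (g * h) = Phi χ₁ χ₂ χ₃ A B C g * Phi χ₁ χ₂ χ₃ A B C h := by
  unfold Phi
  rw [M6_mul]
  exact M6_congr (hm₁ g h) (hm₂ g h) (hm₃ g h)
    (by linear_combination (hA g h)) (by linear_combination (hB g h))
    (by linear_combination (hC g h))

theorem Phi_one : Phi χ₁ χ₂ χ₃ A B C 1 = 1 := by
  have h1 : χ₁ (1 : G) = 0 := hom_one hm₁
  have h2 : χ₂ (1 : G) = 0 := hom_one hm₂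
  have h3 : χ₃ (1 : G) = 0 := hom_one hm₃
  have hA1 : A (1 : G) = 0 := by
    have := hA 1 1
    rw [mul_one, h1, zero_mul] at this
    linear_combination this
  have hB1 : B (1 : G) = 0 := by
    have := hB 1 1
    rw [mul_one, h2, zero_mul] at this
    linear_combination this
  have hC1 : C (1 : G) = 0 := by
    have := hC 1 1
    rw [mul_one, h1, hA1, zero_mul, zero_mul] at this
    linear_combination -this
  rw [Phi, h1, h2, h3, hA1, hB1, hC1, neg_zero, M6_one]

theorem Phi_mul_inv (g : G) : Phi χ₁ χ₂ χ₃ A B C g * Phi χ₁ χ₂ χ₃ A B C g⁻¹ = 1 := by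
  rw [← Phi_mul χ₁ χ₂ χ₃ A B C hm₁ hm₂ hm₃ hA hB hC, mul_inv_cancel]
  exact Phi_one χ₁ χ₂ χ₃ A B C hm₁ hm₂ hm₃ hA hB hC

theorem Phi_inv_mul (g : G) : Phi χ₁ χ₂ χ₃ A B C g⁻¹ * Phi χ₁ χ₂ χ₃ A B C g = 1 := by
  rw [← Phi_mul χ₁ χ₂ χ₃ A B C hm₁ hm₂ hm₃ hA hB hC, inv_mul_cancel]
  exact Phi_one χ₁ χ₂ χ₃ A B C hm₁ hm₂ hm₃ hA hB hC

theorem Phi_inv_eq {g : G} {a b c d e f : ZMod p} (h : Phi χ₁ χ₂ χ₃ A B C g = M6 a b c d e f) :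
    Phi χ₁ χ₂ χ₃ A B C g⁻¹ = M6 (-a) (-b) (-c) (a*b - d) (b*c - e) (a*e + d*c - a*b*c - f) :=
  left_inv_eq_right_inv (Phi_inv_mul χ₁ χ₂ χ₃ A B C hm₁ hm₂ hm₃ hA hB hC g)
    (by rw [h]; exact M6_mul_inv a b c d e f)

theorem Phi_pow (g : G) (n : ℕ) :
    Phi χ₁ χ₂ χ₃ A B C (g ^ n) = (Phi χ₁ χ₂ χ₃ A B C g) ^ n := by
  induction n with
  | zero => simpa using Phi_one χ₁ χ₂ χ₃ A B C hm₁ hm₂ hm₃ hA hB hC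
  | succ n ih => rw [pow_succ, pow_succ, ← ih, Phi_mul χ₁ χ₂ χ₃ A B C hm₁ hm₂ hm₃ hA hB hC]

end Phi

section Gen

variable {p : ℕ} {G : Type*} [Group G] (χ₁ χ₂ χ₃ A B C : G → ZMod p)

theorem Phi_gen [NeZero p]
    (hm₁ : ∀ g h : G, χ₁ (g * h) = χ₁ g + χ₁ h)
    (hm₂ : ∀ g h : G, χ₂ (g * h) = χ₂ g + χ₂ h)
    (hm₃ : ∀ g h : G, χ₃ (g * h) = χ₃ g + χ₃ h)
    (hA : ∀ g h : G, A h - A (g * h) + A g = χ₁ g * χ₂ h)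
    (hB : ∀ g h : G, B h - B (g * h) + B g = χ₂ g * χ₃ h)
    (hC : ∀ g h : G, χ₁ g * B h + A g * χ₃ h = C h - C (g * h) + C g)
    {g₁ g₂ g₃ : G} {d₁ e₁ f₁ d₂ e₂ f₂ d₃ e₃ f₃ : ZMod p}
    (hx : Phi χ₁ χ₂ χ₃ A B C g₁ = M6 1 0 0 d₁ e₁ f₁)
    (hy : Phi χ₁ χ₂ χ₃ A B C g₂ = M6 0 1 0 d₂ e₂ f₂)
    (hz : Phi χ₁ χ₂ χ₃ A B C g₃ = M6 0 0 1 d₃ e₃ f₃)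
    (a b c d e f : ZMod p) :
    ∃ g : G, Phi χ₁ χ₂ χ₃ A B C g = M6 a b c d e f := by
  set Φ := Phi χ₁ χ₂ χ₃ A B C with hΦ
  have φmul : ∀ g h : G, Φ (g * h) = Φ g * Φ h :=
    Phi_mul χ₁ χ₂ χ₃ A B C hm₁ hm₂ hm₃ hA hB hC
  have φone : Φ 1 = 1 := Phi_one χ₁ χ₂ χ₃ A B C hm₁ hm₂ hm₃ hA hB hC
  have φpow : ∀ (g : G) (n : ℕ), Φ (g ^ n) = Φ g ^ n :=
    Phi_pow χ₁ χ₂ χ₃ A B C hm₁ hm₂ hm₃ hA hB hC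
  have φinv : ∀ {g : G} {a b c d e f : ZMod p}, Φ g = M6 a b c d e f →
      Φ g⁻¹ = M6 (-a) (-b) (-c) (a*b - d) (b*c - e) (a*e + d*c - a*b*c - f) :=
    fun h => Phi_inv_eq χ₁ χ₂ χ₃ A B C hm₁ hm₂ hm₃ hA hB hC h
  have hval : ∀ s : ZMod p, ((s.val : ℕ) : ZMod p) = s := fun s => by
    rw [ZMod.natCast_val, ZMod.cast_id]
  -- the element v = [g₂, g₃] with coordinates (0,0,0,0,1,*)
  have hv : ∃ (t : ZMod p) (gv : G), Φ gv = M6 0 0 0 0 1 t := by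
    refine ⟨d₂, g₂ * g₃ * g₂⁻¹ * g₃⁻¹, ?_⟩
    rw [φmul, φmul, φmul, hy, hz, φinv hy, φinv hz, M6_mul, M6_mul, M6_mul]
    exact M6_congr (by ring) (by ring) (by ring) (by ring) (by ring) (by ring)
  -- the element u = [g₁, g₂] with coordinates (0,0,0,1,0,*)
  have hu : ∃ (t : ZMod p) (gu : G), Φ gu = M6 0 0 0 1 0 t := by
    refine ⟨e₂, g₁ * g₂ * g₁⁻¹ * g₂⁻¹, ?_⟩
    rw [φmul, φmul, φmul, hx, hy, φinv hx, φinv hy, M6_mul, M6_mul, M6_mul]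
    exact M6_congr (by ring) (by ring) (by ring) (by ring) (by ring) (by ring)
  -- the central element w = [g₁, v]
  have hw : ∃ gw : G, Φ gw = M6 0 0 0 0 0 1 := by
    obtain ⟨t, gv, hgv⟩ := hv
    refine ⟨g₁ * gv * g₁⁻¹ * gv⁻¹, ?_⟩
    simp only [φmul]
    rw [hx, hgv, φinv hx, φinv hgv, M6_mul, M6_mul, M6_mul]
    exact M6_congr (by ring) (by ring) (by ring) (by ring) (by ring) (by ring)
  -- all central elements
  have hcent : ∀ s : ZMod p, ∃ g : G, Φ g = M6 0 0 0 0 0 s := by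
    intro s
    obtain ⟨gw, hgw⟩ := hw
    refine ⟨gw ^ s.val, ?_⟩
    rw [φpow, hgw, M6_low_pow]
    exact M6_congr rfl rfl rfl (by ring) (by ring) (by rw [mul_one, hval])
  -- all d-axis elements
  have hd : ∀ s : ZMod p, ∃ g : G, Φ g = M6 0 0 0 s 0 0 := by
    intro s
    obtain ⟨t, gu, hgu⟩ := hu
    obtain ⟨gc, hgc⟩ := hcent (-t)
    have hgud : Φ (gu * gc) = M6 0 0 0 1 0 0 := by
      rw [φmul, hgu, hgc, M6_mul]
      exact M6_congr (by ring) (by ring) (by ring) (by ring) (by ring) (by ring)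
    refine ⟨(gu * gc) ^ s.val, ?_⟩
    rw [φpow, hgud, M6_low_pow]
    exact M6_congr rfl rfl rfl (by rw [mul_one, hval]) (by ring) (by ring)
  -- all e-axis elements
  have he : ∀ s : ZMod p, ∃ g : G, Φ g = M6 0 0 0 0 s 0 := by
    intro s
    obtain ⟨t, gv, hgv⟩ := hv
    obtain ⟨gc, hgc⟩ := hcent (-t)
    have hgvd : Φ (gv * gc) = M6 0 0 0 0 1 0 := by
      rw [φmul, hgv, hgc, M6_mul]
      exact M6_congr (by ring) (by ring) (by ring) (by ring) (by ring) (by ring)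
    refine ⟨(gv * gc) ^ s.val, ?_⟩
    rw [φpow, hgvd, M6_low_pow]
    exact M6_congr rfl rfl rfl (by ring) (by rw [mul_one, hval]) (by ring)
  -- powers of the generators
  have hxp : ∀ n : ℕ, ∃ D E F' : ZMod p, Φ (g₁ ^ n) = M6 (n : ZMod p) 0 0 D E F' := by
    intro n
    induction n with
    | zero =>
      refine ⟨0, 0, 0, ?_⟩
      rw [pow_zero, φone, ← M6_one]
      exact M6_congr (by push_cast; ring) rfl rfl rfl rfl rfl
    | succ n ih =>
      obtain ⟨D, E, F', hφ⟩ := ih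
      refine ⟨D + d₁, E + e₁, F' + f₁ + n * e₁, ?_⟩
      rw [pow_succ, φmul, hφ, hx, M6_mul]
      exact M6_congr (by push_cast; ring) (by ring) (by ring) (by ring) (by ring) (by ring)
  have hyp : ∀ n : ℕ, ∃ D E F' : ZMod p, Φ (g₂ ^ n) = M6 0 (n : ZMod p) 0 D E F' := by
    intro n
    induction n with
    | zero =>
      refine ⟨0, 0, 0, ?_⟩
      rw [pow_zero, φone, ← M6_one]
      exact M6_congr rfl (by push_cast; ring) rfl rfl rfl rfl
    | succ n ih =>
      obtain ⟨D, E, F', hφ⟩ := ih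
      refine ⟨D + d₂, E + e₂, F' + f₂, ?_⟩
      rw [pow_succ, φmul, hφ, hy, M6_mul]
      exact M6_congr (by ring) (by push_cast; ring) (by ring) (by ring) (by ring) (by ring)
  have hzp : ∀ n : ℕ, ∃ D E F' : ZMod p, Φ (g₃ ^ n) = M6 0 0 (n : ZMod p) D E F' := by
    intro n
    induction n with
    | zero =>
      refine ⟨0, 0, 0, ?_⟩
      rw [pow_zero, φone, ← M6_one]
      exact M6_congr rfl rfl (by push_cast; ring) rfl rfl rfl
    | succ n ih =>
      obtain ⟨D, E, F', hφ⟩ := ih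
      refine ⟨D + d₃, E + e₃, F' + f₃ + D, ?_⟩
      rw [pow_succ, φmul, hφ, hz, M6_mul]
      exact M6_congr (by ring) (by ring) (by push_cast; ring) (by ring) (by push_cast; ring) (by ring)
  -- arbitrary superdiagonal
  have habc : ∃ (g : G) (D E F' : ZMod p), Φ g = M6 a b c D E F' := by
    obtain ⟨D1, E1, F1, h1⟩ := hxp a.val
    obtain ⟨D2, E2, F2, h2⟩ := hyp b.val
    obtain ⟨D3, E3, F3, h3⟩ := hzp c.val
    have key : Φ (g₁ ^ a.val * g₂ ^ b.val * g₃ ^ c.val) =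
        M6 a b c (D1 + D2 + a * b + D3) (E1 + E2 + E3 + b * c)
          (F1 + F2 + a * E2 + F3 + a * E3 + (D1 + D2 + a * b) * c) := by
      rw [φmul, φmul, h1, h2, h3, M6_mul, M6_mul]
      exact M6_congr (by rw [add_zero, add_zero, hval]) (by rw [zero_add, add_zero, hval])
        (by rw [zero_add, zero_add, hval])
        (by rw [hval a, hval b]; ring) (by rw [hval b, hval c]; ring)
        (by rw [hval a, hval b, hval c]; ring)
    exact ⟨_, _, _, _, key⟩
  obtain ⟨g, D, E, F', hg⟩ := habc
  obtain ⟨gd, hgd⟩ := hd (d - D)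
  obtain ⟨ge, hge⟩ := he (e - E)
  obtain ⟨gf, hgf⟩ := hcent (f - (F' + a * (e - E)))
  refine ⟨g * gd * ge * gf, ?_⟩
  rw [φmul, φmul, φmul, hg, hgd, hge, hgf, M6_mul, M6_mul, M6_mul]
  exact M6_congr (by ring) (by ring) (by ring) (by ring) (by ring) (by ring)

end Gen

section LinAlg

variable {p : ℕ} [Fact p.Prime] {G : Type*} [Group G] (χ₁ χ₂ χ₃ : G → ZMod p)

theorem exists_unit_triples
    (hm₁ : ∀ g h : G, χ₁ (g * h) = χ₁ g + χ₁ h)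
    (hm₂ : ∀ g h : G, χ₂ (g * h) = χ₂ g + χ₂ h)
    (hm₃ : ∀ g h : G, χ₃ (g * h) = χ₃ g + χ₃ h)
    (hindep : ∀ x y z : ZMod p,
      (∀ g : G, x * χ₁ g + y * χ₂ g + z * χ₃ g = 0) → x = 0 ∧ y = 0 ∧ z = 0)
    (i : Fin 3) :
    ∃ g : G, (![χ₁ g, χ₂ g, χ₃ g] : Fin 3 → ZMod p) = Pi.single i 1 := by
  haveI : NeZero p := ⟨(Fact.out : p.Prime).ne_zero⟩
  have hval : ∀ s : ZMod p, ((s.val : ℕ) : ZMod p) = s := fun s => by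
    rw [ZMod.natCast_val, ZMod.cast_id]
  set L : G → (Fin 3 → ZMod p) := fun g => ![χ₁ g, χ₂ g, χ₃ g] with hL
  have hLadd : ∀ g h : G, L (g * h) = L g + L h := by
    intro g h; funext j
    fin_cases j <;> simp [hL, hm₁ g h, hm₂ g h, hm₃ g h]
  have hL1 : L 1 = 0 := by
    funext j
    fin_cases j <;> simp [hL, hom_one hm₁, hom_one hm₂, hom_one hm₃]
  have hLpow : ∀ (g : G) (n : ℕ), L (g ^ n) = (n : ZMod p) • L g := by
    intro g n; funext j
    fin_cases j <;> simp [hL, hom_pow hm₁ g n, hom_pow hm₂ g n, hom_pow hm₃ g n]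
  let W : Submodule (ZMod p) (Fin 3 → ZMod p) :=
    { carrier := Set.range L
      add_mem' := by rintro v w ⟨g, rfl⟩ ⟨h, rfl⟩; exact ⟨g * h, hLadd g h⟩
      zero_mem' := ⟨1, hL1⟩
      smul_mem' := by
        rintro s v ⟨g, rfl⟩
        exact ⟨g ^ s.val, by rw [hLpow, hval]⟩ }
  have hmemW : ∀ v, v ∈ W ↔ ∃ g : G, L g = v := fun v => Iff.rfl
  have hWtop : W = ⊤ := by
    by_contra hne
    have hex : ∃ v, v ∉ W := by
      by_contra hall
      push_neg at hall
      exact hne (eq_top_iff.2 fun v _ => hall v)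
    obtain ⟨v, hv⟩ := hex
    have hvq : (Submodule.Quotient.mk v : (Fin 3 → ZMod p) ⧸ W) ≠ 0 := by
      intro hzero
      exact hv ((Submodule.Quotient.mk_eq_zero W).1 hzero)
    have hψex : ∃ ψ : Module.Dual (ZMod p) ((Fin 3 → ZMod p) ⧸ W),
        ψ (Submodule.Quotient.mk v) ≠ 0 := by
      by_contra hall
      push_neg at hall
      exact hvq ((Module.forall_dual_apply_eq_zero_iff (ZMod p) _).1 hall)
    obtain ⟨ψ, hψ⟩ := hψex
    set φf : Module.Dual (ZMod p) (Fin 3 → ZMod p) := ψ.comp W.mkQ with hφf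
    have hexp : ∀ u : Fin 3 → ZMod p, φf u =
        φf (Pi.single 0 1) * u 0 + φf (Pi.single 1 1) * u 1 + φf (Pi.single 2 1) * u 2 := by
      intro u
      have hu : u = u 0 • (Pi.single 0 1 : Fin 3 → ZMod p) +
          u 1 • (Pi.single 1 1 : Fin 3 → ZMod p) +
          u 2 • (Pi.single 2 1 : Fin 3 → ZMod p) := by
        funext j; fin_cases j <;> simp [Pi.single_apply]
      conv_lhs => rw [hu]
      simp only [map_add, _root_.map_smul, smul_eq_mul]
      ring
    have h0 : ∀ g : G, φf (L g) = 0 := by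
      intro g
      have hq : W.mkQ (L g) = 0 := (Submodule.Quotient.mk_eq_zero W).2 ⟨g, rfl⟩
      rw [hφf, LinearMap.comp_apply, hq, map_zero]
    have hcoef := hindep (φf (Pi.single 0 1)) (φf (Pi.single 1 1)) (φf (Pi.single 2 1))
      (fun g => by
        have h := hexp (L g)
        rw [h0 g] at h
        simpa [hL] using h.symm)
    have hφv : φf v = 0 := by
      rw [hexp v, hcoef.1, hcoef.2.1, hcoef.2.2]
      ring
    exact hψ hφv
  have : Pi.single i 1 ∈ W := by rw [hWtop]; exact Submodule.mem_top
  exact (hmemW _).1 this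

end LinAlg


theorem M6_isUU {p : ℕ} (a b c d e f : ZMod p) : IsUpperUnitriangular (M6 a b c d e f) := by
  constructor
  · intro i j hij
    fin_cases i <;> fin_cases j <;>
      simp_all [M6, Matrix.vecHead, Matrix.vecTail]
  · intro i
    fin_cases i <;> simp [M6, Matrix.vecHead, Matrix.vecTail]

theorem eq_M6_of_isUU {p : ℕ} (m : Matrix (Fin 4) (Fin 4) (ZMod p))
    (h : IsUpperUnitriangular m) :
    m = M6 (m 0 1) (m 1 2) (m 2 3) (m 0 2) (m 1 3) (m 0 3) := by
  ext i j
  fin_cases i <;> fin_cases j <;>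
    simp [M6, Matrix.vecHead, Matrix.vecTail] <;>
    first
      | rfl
      | exact h.2 _
      | exact h.1 _ _ (by decide)

/-- **Corollary 4.4.**  Let `G` be a profinite group having the vanishing triple Massey
product property with respect to `F_p`, and let `χ₁, χ₂, χ₃ ∈ H¹(G, F_p)` be
`F_p`-linearly independent with `χ₁ ∪ χ₂ = χ₂ ∪ χ₃ = 0` in `H²(G, F_p)`.  Then there is a
continuous surjective homomorphism `ρ : G → U₄(F_p)` with `ρ₁₂ = χ₁`, `ρ₂₃ = χ₂`,
`ρ₃₄ = χ₃`. -/
theorem surjection_onto_U4_of_vanishing_triple_massey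
    (p : ℕ) [Fact p.Prime]
    (G : Type*) [Group G] [TopologicalSpace G] [IsTopologicalGroup G]
    [CompactSpace G] [TotallyDisconnectedSpace G] [T2Space G]
    (U4 : Subgroup (Matrix.GeneralLinearGroup (Fin 4) (ZMod p)))
    (hU4 : ∀ g : Matrix.GeneralLinearGroup (Fin 4) (ZMod p),
      g ∈ U4 ↔ IsUpperUnitriangular (g : Matrix (Fin 4) (Fin 4) (ZMod p)))
    (χ₁ χ₂ χ₃ : G → ZMod p)
    (h₁ : Continuous χ₁ ∧ ∀ g h : G, χ₁ (g * h) = χ₁ g + χ₁ h)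
    (h₂ : Continuous χ₂ ∧ ∀ g h : G, χ₂ (g * h) = χ₂ g + χ₂ h)
    (h₃ : Continuous χ₃ ∧ ∀ g h : G, χ₃ (g * h) = χ₃ g + χ₃ h)
    (hindep : ∀ x y z : ZMod p,
      (∀ g : G, x * χ₁ g + y * χ₂ g + z * χ₃ g = 0) → x = 0 ∧ y = 0 ∧ z = 0)
    (hvanish : HasVanishingTripleMasseyProduct G p)
    (hcup₁₂ : ∃ c : G → ZMod p, Continuous c ∧
      ∀ g h : G, χ₁ g * χ₂ h = c h - c (g * h) + c g)
    (hcup₂₃ : ∃ c : G → ZMod p, Continuous c ∧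
      ∀ g h : G, χ₂ g * χ₃ h = c h - c (g * h) + c g) :
    ∃ ρ : G →* U4, Continuous ρ ∧ Function.Surjective ρ ∧
      ∀ g : G,
        ((ρ g : Matrix.GeneralLinearGroup (Fin 4) (ZMod p)) :
            Matrix (Fin 4) (Fin 4) (ZMod p)) 0 1 = χ₁ g ∧
        ((ρ g : Matrix.GeneralLinearGroup (Fin 4) (ZMod p)) :
            Matrix (Fin 4) (Fin 4) (ZMod p)) 1 2 = χ₂ g ∧
        ((ρ g : Matrix.GeneralLinearGroup (Fin 4) (ZMod p)) :
            Matrix (Fin 4) (Fin 4) (ZMod p)) 2 3 = χ₃ g := by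
  obtain ⟨hc₁, hm₁⟩ := h₁
  obtain ⟨hc₂, hm₂⟩ := h₂
  obtain ⟨hc₃, hm₃⟩ := h₃
  obtain ⟨A, B, C, hAc, hBc, hCc, hA, hB, hC⟩ :=
    hvanish χ₁ χ₂ χ₃ ⟨hc₁, hm₁⟩ ⟨hc₂, hm₂⟩ ⟨hc₃, hm₃⟩ (by
      obtain ⟨c12, hc12c, h12⟩ := hcup₁₂
      obtain ⟨c23, hc23c, h23⟩ := hcup₂₃
      exact ⟨c12, c23, hc12c, hc23c, fun g h => (h12 g h).symm, fun g h => (h23 g h).symm⟩)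
  haveI : NeZero p := ⟨(Fact.out : p.Prime).ne_zero⟩
  set Φ := Phi χ₁ χ₂ χ₃ A B C with hΦ
  have φmul : ∀ g h : G, Φ (g * h) = Φ g * Φ h :=
    Phi_mul χ₁ χ₂ χ₃ A B C hm₁ hm₂ hm₃ hA hB hC
  have φright : ∀ g : G, Φ g * Φ g⁻¹ = 1 :=
    Phi_mul_inv χ₁ χ₂ χ₃ A B C hm₁ hm₂ hm₃ hA hB hC
  have φleft : ∀ g : G, Φ g⁻¹ * Φ g = 1 :=
    Phi_inv_mul χ₁ χ₂ χ₃ A B C hm₁ hm₂ hm₃ hA hB hC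
  have hΦM6 : ∀ g : G, Φ g = M6 (χ₁ g) (χ₂ g) (χ₃ g) (-A g) (-B g) (C g) := fun g => rfl
  let ρ₀ : G →* Matrix.GeneralLinearGroup (Fin 4) (ZMod p) :=
    MonoidHom.mk' (fun g => ⟨Φ g, Φ g⁻¹, φright g, φleft g⟩)
      (fun g h => Units.ext (φmul g h))
  have hρ₀val : ∀ g : G,
      ((ρ₀ g : Matrix.GeneralLinearGroup (Fin 4) (ZMod p)) :
        Matrix (Fin 4) (Fin 4) (ZMod p)) = Φ g := fun g => rfl
  have hmem : ∀ g : G, ρ₀ g ∈ U4 := by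
    intro g
    rw [hU4, hρ₀val, hΦM6]
    exact M6_isUU _ _ _ _ _ _
  refine ⟨ρ₀.codRestrict U4 hmem, ?_, ?_, ?_⟩
  · -- continuity
    have hΦcont : Continuous Φ := by
      apply continuous_matrix
      intro i j
      fin_cases i <;> fin_cases j <;>
        · simp only [hΦ, Phi, M6, Matrix.cons_val', Matrix.cons_val_zero, Matrix.cons_val_one,
            Matrix.head_cons, Matrix.empty_val', Matrix.cons_val_fin_one, Matrix.head_fin_const,
            Matrix.cons_val_two, Matrix.cons_val_three, Matrix.tail_cons, Matrix.vecHead,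
            Matrix.vecTail, Matrix.of_apply, Function.comp]
          first
            | exact continuous_const
            | exact hc₁
            | exact hc₂
            | exact hc₃
            | exact hCc
            | exact (continuous_of_discreteTopology (α := ZMod p)).comp hAc
            | exact (continuous_of_discreteTopology (α := ZMod p)).comp hBc
    have hρ₀cont : Continuous ρ₀ := by
      apply Units.continuous_iff.2
      constructor
      · exact hΦcont
      · exact hΦcont.comp continuous_inv
    exact Continuous.subtype_mk hρ₀cont _
  · -- surjectivity
    have hsing := exists_unit_triples χ₁ χ₂ χ₃ hm₁ hm₂ hm₃ hindep
    obtain ⟨g₁, hg₁⟩ := hsing 0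
    obtain ⟨g₂, hg₂⟩ := hsing 1
    obtain ⟨g₃, hg₃⟩ := hsing 2
    have hx : Φ g₁ = M6 1 0 0 (-A g₁) (-B g₁) (C g₁) := by
      rw [hΦM6]
      exact M6_congr (by simpa using congrFun hg₁ 0) (by simpa using congrFun hg₁ 1)
        (by simpa using congrFun hg₁ 2) rfl rfl rfl
    have hy : Φ g₂ = M6 0 1 0 (-A g₂) (-B g₂) (C g₂) := by
      rw [hΦM6]
      exact M6_congr (by simpa using congrFun hg₂ 0) (by simpa using congrFun hg₂ 1)
        (by simpa using congrFun hg₂ 2) rfl rfl rfl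
    have hz : Φ g₃ = M6 0 0 1 (-A g₃) (-B g₃) (C g₃) := by
      rw [hΦM6]
      exact M6_congr (by simpa using congrFun hg₃ 0) (by simpa using congrFun hg₃ 1)
        (by simpa using congrFun hg₃ 2) rfl rfl rfl
    intro u
    set m : Matrix (Fin 4) (Fin 4) (ZMod p) :=
      ((u.1 : Matrix.GeneralLinearGroup (Fin 4) (ZMod p)) :
        Matrix (Fin 4) (Fin 4) (ZMod p)) with hm
    have hum : IsUpperUnitriangular m := (hU4 u.1).1 u.2
    have heq := eq_M6_of_isUU m hum
    obtain ⟨g, hg⟩ := Phi_gen χ₁ χ₂ χ₃ A B C hm₁ hm₂ hm₃ hA hB hC hx hy hz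
      (m 0 1) (m 1 2) (m 2 3) (m 0 2) (m 1 3) (m 0 3)
    refine ⟨g, ?_⟩
    apply Subtype.ext
    apply Units.ext
    show Phi χ₁ χ₂ χ₃ A B C g = m
    rw [hg]
    exact heq.symm
  · -- matrix entries
    intro g
    refine ⟨?_, ?_, ?_⟩ <;>
      · show (Φ g) _ _ = _
        rw [hΦM6]
        simp [M6, Matrix.vecHead, Matrix.vecTail]
end

section
/- (Hoechsmann's lemma) Let ℰ be a finite weak embedding problem for a profinite group G, given by a continuous homomorphism α: G → Ū and a surjective homomorphism f: U → Ū of finite groups, with finite abelian kernel M = ker(f). Let ε ∈ H^2(Ū, M) be the cohomology class corresponding to the group extension 1 → M → U → Ū → 1 (where Ū acts on M via lifting and conjugation in U). Then ℰ has a weak solution if and only if α*(ε) = 0 in H^2(G, M). -/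
private lemma hoech_aux1 {U : Type*} [Group U] (sg sh sgh bg bh : U)
    (comm : (bg⁻¹ * sg) * (sh * bh⁻¹) = (sh * bh⁻¹) * (bg⁻¹ * sg)) :
    sg * sh * sgh⁻¹ =
      (sg * bg⁻¹) * (sg * (sh * bh⁻¹) * sg⁻¹) * (sgh * (bg * bh)⁻¹)⁻¹ := by
  have h1 : sg * bg⁻¹ * (sg * (sh * bh⁻¹) * sg⁻¹) * (bg * bh) = sg * sh := by
    calc sg * bg⁻¹ * (sg * (sh * bh⁻¹) * sg⁻¹) * (bg * bh)
        = sg * ((bg⁻¹ * sg) * (sh * bh⁻¹)) * sg⁻¹ * (bg * bh) := by group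
      _ = sg * ((sh * bh⁻¹) * (bg⁻¹ * sg)) * sg⁻¹ * (bg * bh) := by rw [comm]
      _ = sg * sh := by group
  calc sg * sh * sgh⁻¹
      = (sg * bg⁻¹ * (sg * (sh * bh⁻¹) * sg⁻¹) * (bg * bh)) * sgh⁻¹ := by rw [h1]
    _ = (sg * bg⁻¹) * (sg * (sh * bh⁻¹) * sg⁻¹) * (sgh * (bg * bh)⁻¹)⁻¹ := by group

private lemma hoech_aux2 {U : Type*} [Group U] (sg sh sgh cg ch cgh : U)
    (comm : cg * (sg * ch * sg⁻¹) = (sg * ch * sg⁻¹) * cg)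
    (eq : sg * sh * sgh⁻¹ = cg * (sg * ch * sg⁻¹) * cgh⁻¹) :
    cgh⁻¹ * sgh = (cg⁻¹ * sg) * (ch⁻¹ * sh) := by
  have h : cgh⁻¹ = (sg * ch * sg⁻¹)⁻¹ * cg⁻¹ * (sg * sh * sgh⁻¹) := by
    rw [eq]; group
  rw [h]
  calc (sg * ch * sg⁻¹)⁻¹ * cg⁻¹ * (sg * sh * sgh⁻¹) * sgh
      = (cg * (sg * ch * sg⁻¹))⁻¹ * (sg * sh) := by group
    _ = ((sg * ch * sg⁻¹) * cg)⁻¹ * (sg * sh) := by rw [comm]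
    _ = (cg⁻¹ * sg) * (ch⁻¹ * sh) := by group

/-- **Lemma 4.3 (Hoechsmann's lemma).**  Let `G` be a profinite group and let
`ℰ = (α : G → Ū, f : U → Ū)` be a finite weak embedding problem for `G` with finite
abelian kernel `M = ker f`.  Choose a set-theoretic section `s` of `f`; the 2-cocycle
`ε(x,y) = s(x)·s(y)·s(xy)⁻¹` (with values in `M`, on which `Ū` acts by
`x • m = s(x)·m·s(x)⁻¹`, i.e. by lifting and conjugation) represents the cohomology class
`ε ∈ H²(Ū, M)` of the extension `1 → M → U → Ū → 1`.  Then `ℰ` has a weak solution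
(a continuous homomorphism `β : G → U` with `f∘β = α`) if and only if `α*(ε) = 0` in
`H²(G, M)`, i.e. the pulled-back 2-cocycle `(g,h) ↦ ε(α g, α h)` is the coboundary of a
continuous 1-cochain `c : G → M`. -/
theorem hoechsmann_lemma
    (G : Type*) [Group G] [TopologicalSpace G] [IsTopologicalGroup G]
    [CompactSpace G] [TotallyDisconnectedSpace G] [T2Space G]
    (U : Type*) [Group U] [Finite U] [TopologicalSpace U] [DiscreteTopology U]
    (Ubar : Type*) [Group Ubar] [Finite Ubar] [TopologicalSpace Ubar]
    [DiscreteTopology Ubar]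
    (f : U →* Ubar) (hf : Function.Surjective f)
    -- the kernel M = ker f is abelian
    (hM : ∀ x y : f.ker, x * y = y * x)
    (α : G →* Ubar) (hα : Continuous α)
    -- s is a set-theoretic section of f
    (s : Ubar → U) (hs : ∀ x : Ubar, f (s x) = x) :
    -- ℰ has a weak solution iff α*(ε) = 0 in H²(G, M)
    (∃ β : G →* U, Continuous β ∧ f.comp β = α) ↔
    (∃ c : G → U, Continuous c ∧ (∀ g : G, c g ∈ f.ker) ∧
      ∀ g h : G,
        s (α g) * s (α h) * (s (α g * α h))⁻¹
          = c g * (s (α g) * c h * (s (α g))⁻¹) * (c (g * h))⁻¹) := by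
  -- elements of the kernel commute
  have hcomm : ∀ x y : U, x ∈ f.ker → y ∈ f.ker → x * y = y * x := by
    intro x y hx hy
    exact congrArg Subtype.val (hM ⟨x, hx⟩ ⟨y, hy⟩)
  constructor
  · rintro ⟨β, hβc, hβ⟩
    have hb : ∀ g : G, f (β g) = α g := fun g => DFunLike.congr_fun hβ g
    refine ⟨fun g => s (α g) * (β g)⁻¹,
      ((continuous_of_discreteTopology).comp hα).mul hβc.inv, ?_, ?_⟩
    · intro g
      simp [MonoidHom.mem_ker, hs, hb]
    · intro g h
      have hmem1 : (β g)⁻¹ * s (α g) ∈ f.ker := by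
        simp [MonoidHom.mem_ker, hs, hb]
      have hmem2 : s (α h) * (β h)⁻¹ ∈ f.ker := by
        simp [MonoidHom.mem_ker, hs, hb]
      have comm := hcomm _ _ hmem1 hmem2
      have := hoech_aux1 (s (α g)) (s (α h)) (s (α g * α h)) (β g) (β h) comm
      simpa [map_mul] using this
  · rintro ⟨c, hcc, hck, hco⟩
    have hβmul : ∀ g h : G,
        (c (g * h))⁻¹ * s (α (g * h)) =
          ((c g)⁻¹ * s (α g)) * ((c h)⁻¹ * s (α h)) := by
      intro g h
      have hmem2 : s (α g) * c h * (s (α g))⁻¹ ∈ f.ker := by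
        have := hck h
        simp only [MonoidHom.mem_ker, map_mul, map_inv] at this ⊢
        simp [this]
      have comm := hcomm _ _ (hck g) hmem2
      have := hoech_aux2 (s (α g)) (s (α h)) (s (α g * α h)) (c g) (c h)
        (c (g * h)) comm (hco g h)
      simpa [map_mul] using this
    refine ⟨MonoidHom.mk' (fun g => (c g)⁻¹ * s (α g)) hβmul,
      hcc.inv.mul ((continuous_of_discreteTopology).comp hα), ?_⟩
    ext g
    have := hck g
    simp only [MonoidHom.mem_ker] at this
    simp [MonoidHom.mk', hs, this]
end

section
/- Let ℰ(G) = (α: G → Ū, f: U → Ū) be a finite weak embedding problem for a profinite group G with finite abelian kernel M = ker(f). Let φ_i: G_i → G, i ∈ I, be a family of continuous homomorphisms of profinite groups, and suppose the natural homomorphism H^2(G, M) → ∏_{i∈I} H^2(G_i, M) (induced by the φ_i) is injective. Then ℰ(G) has a weak solution if and only if for every i ∈ I the induced weak embedding problem ℰ(G_i) = (α∘φ_i: G_i → Ū, f: U → Ū) has a weak solution. -/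
/-- **Corollary 4.5.**  Let `ℰ(G) = (α : G → Ū, f : U → Ū)` be a finite weak embedding
problem for a profinite group `G` with finite abelian kernel `M = ker f` (on which `G`
acts through `α` by lifting and conjugation: `g • m = s(α g)·m·s(α g)⁻¹` for a
set-theoretic section `s` of `f`).  Let `φᵢ : Gᵢ → G` be a family of continuous
homomorphisms of profinite groups and assume that the natural homomorphism
`H²(G, M) → ∏ᵢ H²(Gᵢ, M)` is injective (equivalently, that its kernel is trivial:
every continuous 2-cocycle on `G` with values in `M` whose restriction to each `Gᵢ` is a
coboundary is itself a coboundary).  Then `ℰ(G)` has a weak solution if and only if for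
every `i` the induced weak embedding problem `ℰ(Gᵢ) = (α∘φᵢ, f)` has a weak solution. -/
theorem embedding_problem_local_global
    (G : Type*) [Group G] [TopologicalSpace G] [IsTopologicalGroup G]
    [CompactSpace G] [TotallyDisconnectedSpace G] [T2Space G]
    (U : Type*) [Group U] [Finite U] [TopologicalSpace U] [DiscreteTopology U]
    (Ubar : Type*) [Group Ubar] [Finite Ubar] [TopologicalSpace Ubar]
    [DiscreteTopology Ubar]
    (f : U →* Ubar) (hf : Function.Surjective f)
    -- the kernel M = ker f is abelian
    (hM : ∀ x y : f.ker, x * y = y * x)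
    (α : G →* Ubar) (hα : Continuous α)
    -- a set-theoretic section of f, used to express the action of G on M through α
    (s : Ubar → U) (hs : ∀ x : Ubar, f (s x) = x)
    -- the family of continuous homomorphisms φᵢ : Gᵢ → G of profinite groups
    (ι : Type*) (Gi : ι → Type*) [∀ i, Group (Gi i)] [∀ i, TopologicalSpace (Gi i)]
    [∀ i, IsTopologicalGroup (Gi i)] [∀ i, CompactSpace (Gi i)]
    [∀ i, TotallyDisconnectedSpace (Gi i)] [∀ i, T2Space (Gi i)]
    (φ : ∀ i, Gi i →* G) (hφ : ∀ i, Continuous (φ i))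
    -- the natural map H²(G, M) → ∏ᵢ H²(Gᵢ, M) is injective
    (hinj : ∀ z : G → G → U,
      Continuous (fun q : G × G => z q.1 q.2) →
      (∀ g h : G, z g h ∈ f.ker) →
      (∀ g h k : G,
        s (α g) * z h k * (s (α g))⁻¹ * z g (h * k) = z (g * h) k * z g h) →
      (∀ i, ∃ c : Gi i → U, Continuous c ∧ (∀ x, c x ∈ f.ker) ∧
        ∀ x y : Gi i,
          z (φ i x) (φ i y)
            = c x * (s (α (φ i x)) * c y * (s (α (φ i x)))⁻¹) * (c (x * y))⁻¹) →
      (∃ c : G → U, Continuous c ∧ (∀ g, c g ∈ f.ker) ∧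
        ∀ g h : G,
          z g h = c g * (s (α g) * c h * (s (α g))⁻¹) * (c (g * h))⁻¹)) :
    -- ℰ(G) is weakly solvable iff every ℰ(Gᵢ) is weakly solvable
    (∃ β : G →* U, Continuous β ∧ f.comp β = α) ↔
    (∀ i, ∃ β : Gi i →* U, Continuous β ∧ f.comp β = α.comp (φ i)) := by
  constructor
  · rintro ⟨β, hβc, hβf⟩ i
    exact ⟨β.comp (φ i), hβc.comp (hφ i), by rw [← MonoidHom.comp_assoc, hβf]⟩
  · intro hloc
    haveI : IsTopologicalGroup U :=
      { continuous_mul := continuous_of_discreteTopology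
        continuous_inv := continuous_of_discreteTopology }
    have hsc : Continuous s := continuous_of_discreteTopology
    have hcomm : ∀ u v : U, f u = 1 → f v = 1 → u * v = v * u := fun u v hu hv =>
      congrArg Subtype.val (hM ⟨u, MonoidHom.mem_ker.mpr hu⟩ ⟨v, MonoidHom.mem_ker.mpr hv⟩)
    -- the 2-cocycle of the extension pulled back along α
    have hcont : Continuous (fun q : G × G =>
        s (α q.1) * s (α q.2) * (s (α (q.1 * q.2)))⁻¹) :=
      ((hsc.comp (hα.comp continuous_fst)).mul
        (hsc.comp (hα.comp continuous_snd))).mul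
        ((hsc.comp (hα.comp (continuous_fst.mul continuous_snd))).inv)
    have hker : ∀ g h : G, s (α g) * s (α h) * (s (α (g * h)))⁻¹ ∈ f.ker := by
      intro g h
      exact MonoidHom.mem_ker.mpr (by simp only [map_mul, map_inv, hs]; group)
    have hcoc : ∀ g h k : G,
        s (α g) * (s (α h) * s (α k) * (s (α (h * k)))⁻¹) * (s (α g))⁻¹ *
          (s (α g) * s (α (h * k)) * (s (α (g * (h * k))))⁻¹)
        = (s (α (g * h)) * s (α k) * (s (α (g * h * k)))⁻¹) *
          (s (α g) * s (α h) * (s (α (g * h)))⁻¹) := by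
      intro g h k
      rw [mul_assoc g h k]
      rw [hcomm (s (α (g * h)) * s (α k) * (s (α (g * (h * k))))⁻¹)
        (s (α g) * s (α h) * (s (α (g * h)))⁻¹)
        (by simp only [map_mul, map_inv, hs]; group)
        (by simp only [map_mul, map_inv, hs]; group)]
      group
    have hlocal : ∀ i, ∃ c : Gi i → U, Continuous c ∧ (∀ x, c x ∈ f.ker) ∧
        ∀ x y : Gi i,
          s (α (φ i x)) * s (α (φ i y)) * (s (α (φ i x * φ i y)))⁻¹
            = c x * (s (α (φ i x)) * c y * (s (α (φ i x)))⁻¹) * (c (x * y))⁻¹ := by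
      intro i
      obtain ⟨β, hβc, hβf⟩ := hloc i
      have hfβ : ∀ x, f (β x) = α (φ i x) := fun x => DFunLike.congr_fun hβf x
      refine ⟨fun x => s (α (φ i x)) * (β x)⁻¹, ?_, ?_, ?_⟩
      · exact (hsc.comp (hα.comp (hφ i))).mul hβc.inv
      · intro x
        exact MonoidHom.mem_ker.mpr (by simp only [map_mul, map_inv, hs, hfβ]; group)
      · intro x y
        show s (α (φ i x)) * s (α (φ i y)) * (s (α (φ i x * φ i y)))⁻¹
          = (s (α (φ i x)) * (β x)⁻¹) *
            (s (α (φ i x)) * (s (α (φ i y)) * (β y)⁻¹) * (s (α (φ i x)))⁻¹) *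
            (s (α (φ i (x * y))) * (β (x * y))⁻¹)⁻¹
        rw [map_mul (φ i), map_mul β]
        have hk : (s (α (φ i x)) * (β x)⁻¹) *
            (β x * (s (α (φ i y)) * (β y)⁻¹) * (β x)⁻¹)
            = (β x * (s (α (φ i y)) * (β y)⁻¹) * (β x)⁻¹) *
              (s (α (φ i x)) * (β x)⁻¹) :=
          hcomm _ _ (by simp only [map_mul, map_inv, hs, hfβ]; group)
            (by simp only [map_mul, map_inv, hs, hfβ]; group)
        symm
        calc (s (α (φ i x)) * (β x)⁻¹) *
              (s (α (φ i x)) * (s (α (φ i y)) * (β y)⁻¹) * (s (α (φ i x)))⁻¹) *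
              (s (α (φ i x * φ i y)) * (β x * β y)⁻¹)⁻¹
            = (s (α (φ i x)) * (β x)⁻¹) *
              ((s (α (φ i x)) * (β x)⁻¹) *
                (β x * (s (α (φ i y)) * (β y)⁻¹) * (β x)⁻¹)) *
              ((s (α (φ i x)) * (β x)⁻¹)⁻¹ *
                (β x * β y * (s (α (φ i x * φ i y)))⁻¹)) := by group
          _ = (s (α (φ i x)) * (β x)⁻¹) *
              ((β x * (s (α (φ i y)) * (β y)⁻¹) * (β x)⁻¹) *
                (s (α (φ i x)) * (β x)⁻¹)) *
              ((s (α (φ i x)) * (β x)⁻¹)⁻¹ *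
                (β x * β y * (s (α (φ i x * φ i y)))⁻¹)) := by rw [hk]
          _ = s (α (φ i x)) * s (α (φ i y)) * (s (α (φ i x * φ i y)))⁻¹ := by group
    obtain ⟨c, hc1, hc2, hc3⟩ := hinj
      (fun g h => s (α g) * s (α h) * (s (α (g * h)))⁻¹) hcont hker hcoc hlocal
    have hc3' : ∀ g h : G, s (α g) * s (α h) * (s (α (g * h)))⁻¹
        = c g * (s (α g) * c h * (s (α g))⁻¹) * (c (g * h))⁻¹ := hc3
    have hfc : ∀ g, f (c g) = 1 := fun g => MonoidHom.mem_ker.mp (hc2 g)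
    refine ⟨MonoidHom.mk' (fun g => (c g)⁻¹ * s (α g)) ?_, ?_, ?_⟩
    · intro g h
      show (c (g * h))⁻¹ * s (α (g * h)) = ((c g)⁻¹ * s (α g)) * ((c h)⁻¹ * s (α h))
      have e' : s (α (g * h)) =
          (c g * (s (α g) * c h * (s (α g))⁻¹) * (c (g * h))⁻¹)⁻¹ *
            (s (α g) * s (α h)) := by
        rw [← hc3' g h]; group
      have hk2 : (s (α g) * (c h)⁻¹ * (s (α g))⁻¹) * (c g)⁻¹
          = (c g)⁻¹ * (s (α g) * (c h)⁻¹ * (s (α g))⁻¹) :=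
        hcomm _ _ (by simp only [map_mul, map_inv, hs, hfc]; group)
          (by simp only [map_inv, hfc]; group)
      rw [e']
      calc (c (g * h))⁻¹ *
            ((c g * (s (α g) * c h * (s (α g))⁻¹) * (c (g * h))⁻¹)⁻¹ *
              (s (α g) * s (α h)))
          = (s (α g) * (c h)⁻¹ * (s (α g))⁻¹) * (c g)⁻¹ *
              (s (α g) * s (α h)) := by group
        _ = (c g)⁻¹ * (s (α g) * (c h)⁻¹ * (s (α g))⁻¹) *
              (s (α g) * s (α h)) := by rw [hk2]
        _ = ((c g)⁻¹ * s (α g)) * ((c h)⁻¹ * s (α h)) := by group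
    · show Continuous fun g => (c g)⁻¹ * s (α g)
      exact hc1.inv.mul (hsc.comp hα)
    · ext g
      show f ((c g)⁻¹ * s (α g)) = α g
      simp only [map_mul, map_inv, hs, hfc]; group
end

section
/- Let p be a prime and let G be a profinite group with closed subgroups G_i, i ∈ I. Let A be the subgroup of U_4(F_p) of matrices whose off-diagonal entries vanish except possibly at positions (1,3), (1,4), (2,4), with ψ: F_p^3 → Aut(A) the action induced by conjugation. Suppose that for every continuous homomorphism α: G → F_p^3, the restriction map H^2(G, A) → ∏_{i∈I} H^2(G_i, A) is injective, where G acts on A via ψ∘α. If each G_i has the vanishing triple Massey product property with respect to F_p, then G also has the vanishing triple Massey product property with respect to F_p. -/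
open Matrix

section MasseyAux

variable {p : ℕ}

/-- The matrix `1 + a E₁₃ + b E₁₄ + c E₂₄` (0-indexed `E₀₂, E₀₃, E₁₃`). -/
def Amat (p : ℕ) (a b c : ZMod p) : Matrix (Fin 4) (Fin 4) (ZMod p) :=
  1 + a • Matrix.single 0 2 (1 : ZMod p)
    + b • Matrix.single 0 3 (1 : ZMod p)
    + c • Matrix.single 1 3 (1 : ZMod p)

/-- The unitriangular lift `s(t)` of `t ∈ F_p³`. -/
def Smat (p : ℕ) (t : Fin 3 → ZMod p) : Matrix (Fin 4) (Fin 4) (ZMod p) :=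
  1 + t 0 • Matrix.single 0 1 (1 : ZMod p)
    + t 1 • Matrix.single 1 2 (1 : ZMod p)
    + t 2 • Matrix.single 2 3 (1 : ZMod p)

/-- The inverse of `Smat`. -/
def Sinvm (p : ℕ) (t : Fin 3 → ZMod p) : Matrix (Fin 4) (Fin 4) (ZMod p) :=
  1 - t 0 • Matrix.single 0 1 (1 : ZMod p)
    - t 1 • Matrix.single 1 2 (1 : ZMod p)
    - t 2 • Matrix.single 2 3 (1 : ZMod p)
    + (t 0 * t 1) • Matrix.single 0 2 (1 : ZMod p)
    + (t 1 * t 2) • Matrix.single 1 3 (1 : ZMod p)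
    - (t 0 * t 1 * t 2) • Matrix.single 0 3 (1 : ZMod p)

lemma Amat_mul (a b c a' b' c' : ZMod p) :
    Amat p a b c * Amat p a' b' c' = Amat p (a + a') (b + b') (c + c') := by
  ext i j
  fin_cases i <;> fin_cases j <;>
    simp [Amat, Matrix.mul_apply, Fin.sum_univ_four, Matrix.single,
      Matrix.one_apply] <;> ring

lemma Amat_zero : Amat p 0 0 0 = 1 := by simp [Amat]

lemma Amat_02 (a b c : ZMod p) : Amat p a b c 0 2 = a := by
  simp [Amat, Matrix.single, Matrix.one_apply]
lemma Amat_03 (a b c : ZMod p) : Amat p a b c 0 3 = b := by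
  simp [Amat, Matrix.single, Matrix.one_apply]
lemma Amat_13 (a b c : ZMod p) : Amat p a b c 1 3 = c := by
  simp [Amat, Matrix.single, Matrix.one_apply]

lemma S_mul_Sinv (t : Fin 3 → ZMod p) : Smat p t * Sinvm p t = 1 := by
  ext i j
  fin_cases i <;> fin_cases j <;>
    simp [Smat, Sinvm, Matrix.mul_apply, Fin.sum_univ_four, Matrix.single,
      Matrix.one_apply] <;> ring

lemma Sinv_mul_S (t : Fin 3 → ZMod p) : Sinvm p t * Smat p t = 1 := by
  ext i j
  fin_cases i <;> fin_cases j <;>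
    simp [Smat, Sinvm, Matrix.mul_apply, Fin.sum_univ_four, Matrix.single,
      Matrix.one_apply] <;> ring

lemma S_conj (t : Fin 3 → ZMod p) (a b c : ZMod p) :
    Smat p t * Amat p a b c * Sinvm p t = Amat p a (b + t 0 * c - t 2 * a) c := by
  ext i j
  fin_cases i <;> fin_cases j <;>
    simp [Smat, Sinvm, Amat, Matrix.mul_apply, Fin.sum_univ_four, Matrix.single,
      Matrix.one_apply] <;> ring

lemma S_unitri (t : Fin 3 → ZMod p) : IsUpperUnitriangular (Smat p t) := by
  constructor
  · intro i j hij
    fin_cases i <;> fin_cases j <;>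
      simp_all [Smat, Matrix.single, Matrix.one_apply]
  · intro i
    fin_cases i <;> simp [Smat, Matrix.single, Matrix.one_apply]

lemma S_01 (t : Fin 3 → ZMod p) : Smat p t 0 1 = t 0 := by
  simp [Smat, Matrix.single, Matrix.one_apply]
lemma S_12 (t : Fin 3 → ZMod p) : Smat p t 1 2 = t 1 := by
  simp [Smat, Matrix.single, Matrix.one_apply]
lemma S_23 (t : Fin 3 → ZMod p) : Smat p t 2 3 = t 2 := by
  simp [Smat, Matrix.single, Matrix.one_apply]

/-- `Amat` as an element of `GL₄`. -/
def Agl (p : ℕ) (a b c : ZMod p) : Matrix.GeneralLinearGroup (Fin 4) (ZMod p) :=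
  ⟨Amat p a b c, Amat p (-a) (-b) (-c),
    by rw [Amat_mul, add_neg_cancel, add_neg_cancel, add_neg_cancel]; exact Amat_zero,
    by rw [Amat_mul, neg_add_cancel, neg_add_cancel, neg_add_cancel]; exact Amat_zero⟩

/-- `Smat` as an element of `GL₄`. -/
def Sgl (p : ℕ) (t : Fin 3 → ZMod p) : Matrix.GeneralLinearGroup (Fin 4) (ZMod p) :=
  ⟨Smat p t, Sinvm p t, S_mul_Sinv t, Sinv_mul_S t⟩

lemma Agl_mul (a b c a' b' c' : ZMod p) :
    Agl p a b c * Agl p a' b' c' = Agl p (a + a') (b + b') (c + c') :=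
  Units.ext (Amat_mul a b c a' b' c')

lemma Agl_inv (a b c : ZMod p) : (Agl p a b c)⁻¹ = Agl p (-a) (-b) (-c) :=
  Units.ext rfl

lemma Sgl_conj (t : Fin 3 → ZMod p) (a b c : ZMod p) :
    Sgl p t * Agl p a b c * (Sgl p t)⁻¹ = Agl p a (b + t 0 * c - t 2 * a) c :=
  Units.ext (S_conj t a b c)

lemma Agl_congr {a b c a' b' c' : ZMod p} (h1 : a = a') (h2 : b = b') (h3 : c = c') :
    Agl p a b c = Agl p a' b' c' := by rw [h1, h2, h3]

lemma Agl_inj {a b c a' b' c' : ZMod p} (h : Agl p a b c = Agl p a' b' c') :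
    a = a' ∧ b = b' ∧ c = c' := by
  have h' : Amat p a b c = Amat p a' b' c' := congrArg Units.val h
  refine ⟨?_, ?_, ?_⟩
  · have := congrFun (congrFun h' 0) 2; rwa [Amat_02, Amat_02] at this
  · have := congrFun (congrFun h' 0) 3; rwa [Amat_03, Amat_03] at this
  · have := congrFun (congrFun h' 1) 3; rwa [Amat_13, Amat_13] at this

lemma Agl_cont {X : Type*} [TopologicalSpace X] {u v w : X → ZMod p}
    (hu : Continuous u) (hv : Continuous v) (hw : Continuous w) :
    Continuous fun x => Agl p (u x) (v x) (w x) := by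
  have h : Continuous (fun q : ZMod p × ZMod p × ZMod p => Agl p q.1 q.2.1 q.2.2) :=
    continuous_of_discreteTopology
  exact h.comp (hu.prodMk (hv.prodMk hw))

end MasseyAux
/-- **Proposition 4.6.**  Let `G` be a profinite group with closed subgroups `Gᵢ`, `i ∈ I`,
and let `A ≤ U₄(F_p)` be the abelian kernel of `U₄(F_p) → F_p³`, on which `F_p³` acts by
`ψ` (induced by conjugation).  Suppose that for every continuous homomorphism
`α : G → F_p³` the restriction map `H²(G, A) → ∏ᵢ H²(Gᵢ, A)` is injective (equivalently,
has trivial kernel: every continuous 2-cocycle with values in `A`, for the action `ψ∘α`,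
whose restriction to each `Gᵢ` is a coboundary is itself a coboundary; the action `ψ∘α` is
expressed by conjugating by a lift `s(α g) ∈ U₄(F_p)` of `α g`).  If each `Gᵢ` has the
vanishing triple Massey product property with respect to `F_p`, then so does `G`. -/
theorem vanishing_triple_massey_local_global
    (p : ℕ) [Fact p.Prime]
    (G : Type*) [Group G] [TopologicalSpace G] [IsTopologicalGroup G]
    [CompactSpace G] [TotallyDisconnectedSpace G] [T2Space G]
    (U4 : Subgroup (Matrix.GeneralLinearGroup (Fin 4) (ZMod p)))
    (hU4 : ∀ g : Matrix.GeneralLinearGroup (Fin 4) (ZMod p),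
      g ∈ U4 ↔ IsUpperUnitriangular (g : Matrix (Fin 4) (Fin 4) (ZMod p)))
    (A : Subgroup (Matrix.GeneralLinearGroup (Fin 4) (ZMod p)))
    (hA : ∀ g : Matrix.GeneralLinearGroup (Fin 4) (ZMod p), g ∈ A ↔ ∃ a b c : ZMod p,
      (g : Matrix (Fin 4) (Fin 4) (ZMod p))
        = 1 + a • Matrix.single 0 2 (1 : ZMod p)
          + b • Matrix.single 0 3 (1 : ZMod p)
          + c • Matrix.single 1 3 (1 : ZMod p))
    -- the closed subgroups Gᵢ of G
    (I : Type*) (Gi : I → Subgroup G) (hGi : ∀ i, IsClosed (Gi i : Set G))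
    -- for every continuous α : G → F_p³, restriction H²(G,A) → ∏ᵢ H²(Gᵢ,A) is injective,
    -- where the action of G on A is ψ∘α (conjugation by unitriangular lifts s(α g))
    (hinj : ∀ α : G → (Fin 3 → ZMod p), Continuous α →
      (∀ g h : G, α (g * h) = α g + α h) →
      ∀ s : (Fin 3 → ZMod p) → Matrix.GeneralLinearGroup (Fin 4) (ZMod p),
      (∀ t, s t ∈ U4 ∧ ∀ i : Fin 3,
        ((s t : Matrix.GeneralLinearGroup (Fin 4) (ZMod p)) :
          Matrix (Fin 4) (Fin 4) (ZMod p)) i.castSucc i.succ = t i) →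
      ∀ z : G → G → Matrix.GeneralLinearGroup (Fin 4) (ZMod p),
        Continuous (fun q : G × G => z q.1 q.2) →
        (∀ g h : G, z g h ∈ A) →
        (∀ g h k : G,
          s (α g) * z h k * (s (α g))⁻¹ * z g (h * k) = z (g * h) k * z g h) →
        (∀ i, ∃ c : Gi i → Matrix.GeneralLinearGroup (Fin 4) (ZMod p),
          Continuous c ∧ (∀ x, c x ∈ A) ∧
          ∀ x y : Gi i,
            z (x : G) (y : G)
              = c x * (s (α (x : G)) * c y * (s (α (x : G)))⁻¹) * (c (x * y))⁻¹) →
        (∃ c : G → Matrix.GeneralLinearGroup (Fin 4) (ZMod p),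
          Continuous c ∧ (∀ g, c g ∈ A) ∧
          ∀ g h : G,
            z g h = c g * (s (α g) * c h * (s (α g))⁻¹) * (c (g * h))⁻¹))
    -- if each Gᵢ has the vanishing triple Massey product property
    (hloc : ∀ i, HasVanishingTripleMasseyProduct (Gi i) p) :
    -- then so does G
    HasVanishingTripleMasseyProduct G p := by
  intro χ₁ χ₂ χ₃ h1 h2 h3 hdef
  obtain ⟨hχ₁c, hχ₁⟩ := h1
  obtain ⟨hχ₂c, hχ₂⟩ := h2
  obtain ⟨hχ₃c, hχ₃⟩ := h3
  obtain ⟨a₁₃, a₂₄, ha₁₃c, ha₂₄c, ha₁₃, ha₂₄⟩ := hdef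
  set α : G → Fin 3 → ZMod p := fun g => ![χ₁ g, χ₂ g, χ₃ g] with hα
  have hα0 : ∀ g, α g 0 = χ₁ g := fun g => rfl
  have hα2 : ∀ g, α g 2 = χ₃ g := fun g => rfl
  have hαc : Continuous α := by
    apply continuous_pi; intro i; fin_cases i <;> simpa [hα]
  have hαhom : ∀ g h : G, α (g * h) = α g + α h := by
    intro g h; funext i
    fin_cases i <;> simp [hα, hχ₁ g h, hχ₂ g h, hχ₃ g h]
  set f : G → G → ZMod p := fun g h => χ₁ g * a₂₄ h + a₁₃ g * χ₃ h with hf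
  set z : G → G → Matrix.GeneralLinearGroup (Fin 4) (ZMod p) :=
    fun g h => Agl p 0 (f g h) 0 with hz
  have hzc : Continuous (fun q : G × G => z q.1 q.2) := by
    apply Agl_cont continuous_const ?_ continuous_const
    exact ((hχ₁c.comp continuous_fst).mul (ha₂₄c.comp continuous_snd)).add
      ((ha₁₃c.comp continuous_fst).mul (hχ₃c.comp continuous_snd))
  have hzmem : ∀ g h : G, z g h ∈ A := fun g h => (hA _).2 ⟨0, f g h, 0, rfl⟩
  have hS : ∀ t, Sgl p t ∈ U4 ∧ ∀ i : Fin 3,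
      ((Sgl p t : Matrix.GeneralLinearGroup (Fin 4) (ZMod p)) :
        Matrix (Fin 4) (Fin 4) (ZMod p)) i.castSucc i.succ = t i := by
    intro t
    refine ⟨(hU4 _).2 (S_unitri t), ?_⟩
    intro i
    fin_cases i
    · exact S_01 t
    · exact S_12 t
    · exact S_23 t
  have hzcoc : ∀ g h k : G,
      Sgl p (α g) * z h k * (Sgl p (α g))⁻¹ * z g (h * k) = z (g * h) k * z g h := by
    intro g h k
    simp only [hz]
    rw [Sgl_conj, Agl_mul, Agl_mul]
    refine Agl_congr (by ring) ?_ (by ring)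
    simp only [hα0, hα2, hf]
    linear_combination (-(χ₁ g)) * ha₂₄ h k + χ₃ k * ha₁₃ g h
      + (-(a₂₄ k)) * hχ₁ g h + a₁₃ g * hχ₃ h k
  have hlocal : ∀ i, ∃ c : Gi i → Matrix.GeneralLinearGroup (Fin 4) (ZMod p),
      Continuous c ∧ (∀ x, c x ∈ A) ∧
      ∀ x y : Gi i,
        z (x : G) (y : G)
          = c x * (Sgl p (α (x : G)) * c y * (Sgl p (α (x : G)))⁻¹) * (c (x * y))⁻¹ := by
    intro i
    have hv : Continuous ((↑) : Gi i → G) := continuous_subtype_val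
    obtain ⟨a', a'', c', ha'c, ha''c, hcc', hA', hA'', hc'⟩ :=
      hloc i (fun x => χ₁ x) (fun x => χ₂ x) (fun x => χ₃ x)
        ⟨hχ₁c.comp hv, fun x y => by simp only [Subgroup.coe_mul]; exact hχ₁ x y⟩
        ⟨hχ₂c.comp hv, fun x y => by simp only [Subgroup.coe_mul]; exact hχ₂ x y⟩
        ⟨hχ₃c.comp hv, fun x y => by simp only [Subgroup.coe_mul]; exact hχ₃ x y⟩
        ⟨fun x => a₁₃ x, fun x => a₂₄ x, ha₁₃c.comp hv, ha₂₄c.comp hv,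
          fun x y => by simp only [Subgroup.coe_mul]; exact ha₁₃ x y,
          fun x y => by simp only [Subgroup.coe_mul]; exact ha₂₄ x y⟩
    refine ⟨fun x => Agl p (a₁₃ x - a' x) (c' x + (a' x - a₁₃ x) * χ₃ x) (a₂₄ x - a'' x),
      ?_, fun x => (hA _).2 ⟨_, _, _, rfl⟩, ?_⟩
    · exact Agl_cont ((ha₁₃c.comp hv).sub ha'c)
        (hcc'.add ((ha'c.sub (ha₁₃c.comp hv)).mul (hχ₃c.comp hv)))
        ((ha₂₄c.comp hv).sub ha''c)
    · intro x y
      simp only [hz]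
      rw [Sgl_conj, Agl_inv, Agl_mul, Agl_mul]
      refine Agl_congr ?_ ?_ ?_
      · simp only [Subgroup.coe_mul]
        linear_combination hA' x y - ha₁₃ (x : G) (y : G)
      · simp only [hα0, hα2, hf, Subgroup.coe_mul]
        linear_combination hc' x y - χ₃ ((x : G) * (y : G)) * hA' x y
          + χ₃ ((x : G) * (y : G)) * ha₁₃ (x : G) (y : G)
          + (a' x - a₁₃ (x : G) + a' y - a₁₃ (y : G)) * hχ₃ (x : G) (y : G)
      · simp only [Subgroup.coe_mul]
        linear_combination hA'' x y - ha₂₄ (x : G) (y : G)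
  obtain ⟨c, hcc, hcm, hcb⟩ := hinj α hαc hαhom (Sgl p) hS z hzc hzmem hzcoc hlocal
  set U : G → ZMod p := fun g => (c g).val 0 2 with hU
  set V : G → ZMod p := fun g => (c g).val 0 3 with hV
  set W : G → ZMod p := fun g => (c g).val 1 3 with hW
  have hUc : Continuous U := (Units.continuous_val.comp hcc).matrix_elem 0 2
  have hVc : Continuous V := (Units.continuous_val.comp hcc).matrix_elem 0 3
  have hWc : Continuous W := (Units.continuous_val.comp hcc).matrix_elem 1 3
  have hrep : ∀ g, c g = Agl p (U g) (V g) (W g) := by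
    intro g
    obtain ⟨a, b, c₀, hval⟩ := (hA _).1 (hcm g)
    have hval' : (c g).val = Amat p a b c₀ := hval
    apply Units.ext
    show (c g).val = Amat p (U g) (V g) (W g)
    simp only [hU, hV, hW]
    rw [hval', Amat_02, Amat_03, Amat_13]
  have key : ∀ g h : G, (0 : ZMod p) = U g + U h + -U (g * h) ∧
      f g h = V g + (V h + χ₁ g * W h - χ₃ g * U h) + -V (g * h) ∧
      (0 : ZMod p) = W g + W h + -W (g * h) := by
    intro g h
    have hthis := hcb g h
    rw [hrep g, hrep h, hrep (g * h)] at hthis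
    rw [Sgl_conj, Agl_inv, Agl_mul, Agl_mul] at hthis
    simp only [hz, hα0, hα2] at hthis
    exact Agl_inj hthis
  refine ⟨fun g => a₁₃ g - U g, fun g => a₂₄ g - W g, fun g => V g + U g * χ₃ g,
    ha₁₃c.sub hUc, ha₂₄c.sub hWc, hVc.add (hUc.mul hχ₃c), ?_, ?_, ?_⟩
  · intro g h
    obtain ⟨e1, e2, e3⟩ := key g h
    linear_combination ha₁₃ g h + e1
  · intro g h
    obtain ⟨e1, e2, e3⟩ := key g h
    linear_combination ha₂₄ g h + e3
  · intro g h
    obtain ⟨e1, e2, e3⟩ := key g h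
    simp only [hf] at e2
    linear_combination e2 + χ₃ (g * h) * e1 + (U g + U h) * hχ₃ g h
end
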